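/- arXiv:1503.04368 — 2 statements merged into one kernel-verified Lean document; each statement's English description precedes it below -/
import Mathlib

section
/- Let ℓ be a prime, m ∈ ℕ ∪ {∞}, K a field, and Σ ⊂ 𝔤^m(K) a valuative subset. Then there exists a unique coarsest valuation v_Σ of K such that Σ ⊂ I_{v_Σ}^m; that is, Σ ⊂ I_{v_Σ}^m, and for every valuation w of K with Σ ⊂ I_w^m one has O_w ⊆ O_{v_Σ}. More precisely, for any valuation w with Σ ⊂ I_w^m, v_Σ is the coarsening of w associated to the maximal convex subgroup of wK contained in w(Σ^⊥), and its unit group is U_{v_Σ} = {t ∈ Σ^⊥ : for all x ∈ K^× ∖ Σ^⊥, t − x ∈ (1−x)·Σ^⊥}. -/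
open Polynomial

noncomputable section

/-- The coefficient ring `Λ_m`: `ℤ/ℓ^m` for finite `m`, and `ℤ_ℓ` for `m = ∞`. -/
def Lam (ℓ : ℕ) [Fact ℓ.Prime] : ℕ∞ → Type
  | ⊤ => PadicInt ℓ
  | (m : ℕ) => ZMod (ℓ ^ m)

instance (ℓ : ℕ) [Fact ℓ.Prime] : (m : ℕ∞) → CommRing (Lam ℓ m)
  | ⊤ => inferInstanceAs (CommRing (PadicInt ℓ))
  | (m : ℕ) => inferInstanceAs (CommRing (ZMod (ℓ ^ m)))

/-- The canonical projection `Λ_m → Λ_n` (for `n ≤ m`; junk value `0` otherwise). -/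
def LamProj (ℓ : ℕ) [Fact ℓ.Prime] : (m n : ℕ∞) → Lam ℓ m →+ Lam ℓ n
  | ⊤, ⊤ => AddMonoidHom.id _
  | ⊤, (n : ℕ) => (PadicInt.toZModPow n).toAddMonoidHom
  | (m : ℕ), (n : ℕ) =>
      if h : ℓ ^ n ∣ ℓ ^ m then (ZMod.castHom h (ZMod (ℓ ^ n))).toAddMonoidHom else 0
  | (_ : ℕ), ⊤ => 0

/-- The `ℓ^m`-minimized Galois group `𝔤^m(K) = Hom(Kˣ, Λ_m)`. -/
abbrev gal (ℓ : ℕ) [Fact ℓ.Prime] (m : ℕ∞) (K : Type*) [Field K] : Type _ :=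
  Additive Kˣ →+ Lam ℓ m

variable {ℓ : ℕ} [Fact ℓ.Prime] {K : Type*} [Field K]

open scoped Classical

/-- Evaluation of `σ ∈ 𝔤^m(K)` at a unit of `K`. -/
def galu {m : ℕ∞} (σ : gal ℓ m K) (x : Kˣ) : Lam ℓ m :=
  σ (Additive.ofMul x)

/-- Evaluation of `σ ∈ 𝔤^m(K)` at an arbitrary element of `K` (junk value `0` at `0`). -/
def galApp {m : ℕ∞} (σ : gal ℓ m K) (x : K) : Lam ℓ m :=
  if hx : x ≠ 0 then galu σ (Units.mk0 x hx) else 0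

/-- Scalar multiplication of `𝔤^m(K)` by `Λ_m`. -/
def galSmul {m : ℕ∞} (a : Lam ℓ m) (σ : gal ℓ m K) : gal ℓ m K :=
  AddMonoidHom.mk' (fun x => a * σ x) (by intro x y; simp only [map_add, mul_add])

/-- The canonical map `𝔤^m(K) → 𝔤^n(K)`, `σ ↦ σ_n`. -/
def galProj (m n : ℕ∞) (σ : gal ℓ m K) : gal ℓ n K :=
  (LamProj ℓ m n).comp σ

/-- `(σ,τ)` is a C-pair: `σ(x)·τ(1−x) = σ(1−x)·τ(x)` for all `x ∈ K ∖ {0,1}`. -/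
def IsCPair {m : ℕ∞} (σ τ : gal ℓ m K) : Prop :=
  ∀ x : K, x ≠ 0 → x ≠ 1 →
    galApp σ x * galApp τ (1 - x) = galApp σ (1 - x) * galApp τ x

/-- A subset of `𝔤^m(K)` is a C-set if all pairs of its elements are C-pairs. -/
def IsCSet {m : ℕ∞} (S : Set (gal ℓ m K)) : Prop :=
  ∀ σ ∈ S, ∀ τ ∈ S, IsCPair σ τ

/-- `μ_{c·ℓ^m} ⊂ K`: the polynomial `X^{c·ℓ^m} − 1` splits completely in `K`
(for all finite exponents when `m = ∞`). -/
def MuIn (K : Type*) [Field K] (c ℓ : ℕ) : ℕ∞ → Prop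
  | ⊤ => ∀ k : ℕ, Polynomial.Splits (Polynomial.X ^ (c * ℓ ^ k) - 1 : Polynomial K)
  | (N : ℕ) => Polynomial.Splits (Polynomial.X ^ (c * ℓ ^ N) - 1 : Polynomial K)

/-- `M_r(n) = (r+1)·n − r`. -/
def Mfun (r : ℕ) : ℕ∞ → ℕ∞
  | ⊤ => ⊤
  | (n : ℕ) => (((r + 1) * n - r : ℕ) : ℕ∞)

/-- `N(n) = M_1((6·ℓ^{3n−2} − 7)·(n−1) + 3n − 2)`. -/
def Nfun (ℓ : ℕ) : ℕ∞ → ℕ∞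
  | ⊤ => ⊤
  | (n : ℕ) => Mfun 1 (((6 * ℓ ^ (3 * n - 2) - 7) * (n - 1) + 3 * n - 2 : ℕ) : ℕ∞)

/-- `R(n) = N(M_2(M_1(n)))`. -/
def Rfun (ℓ : ℕ) (n : ℕ∞) : ℕ∞ :=
  Nfun ℓ (Mfun 2 (Mfun 1 n))

/-- The minimized inertia group `I_v^m` of a valuation (valuation subring) of `K`:
homomorphisms vanishing on the `v`-units. -/
def inertia (ℓ : ℕ) [Fact ℓ.Prime] (m : ℕ∞) (A : ValuationSubring K) : Set (gal ℓ m K) :=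
  {σ | ∀ x : Kˣ, A.valuation (x : K) = 1 → galu σ x = 0}

/-- The minimized decomposition group `D_v^m` of a valuation (valuation subring) of `K`:
homomorphisms vanishing on the principal `v`-units `1 + 𝔪_v`. -/
def decomp (ℓ : ℕ) [Fact ℓ.Prime] (m : ℕ∞) (A : ValuationSubring K) : Set (gal ℓ m K) :=
  {σ | ∀ x : Kˣ, A.valuation ((x : K) - 1) < 1 → galu σ x = 0}

/-- A subgroup of (the units of) a linearly ordered group-with-zero is convex. -/
def IsConvexSub {Γ : Type*} [LinearOrderedCommGroupWithZero Γ] (C : Subgroup Γˣ) : Prop :=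
  ∀ γ c : Γˣ, (1 : Γ) ≤ (γ : Γ) → (γ : Γ) ≤ (c : Γ) → c ∈ C → γ ∈ C

/-- A subgroup is `ℓ`-divisible. -/
def IsLDivisible {Γ : Type*} [LinearOrderedCommGroupWithZero Γ] (ℓ : ℕ) (C : Subgroup Γˣ) :
    Prop :=
  ∀ c ∈ C, ∃ d ∈ C, d ^ ℓ = c

/-- Condition (V1): the value group `vK` contains no nontrivial `ℓ`-divisible convex
subgroups. -/
def NoLDivConvex (ℓ : ℕ) (A : ValuationSubring K) : Prop :=
  ∀ C : Subgroup (A.ValueGroup)ˣ, IsConvexSub C → IsLDivisible ℓ C → C = ⊥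

/-- The residue field `Kv` of a valuation. -/
abbrev resField (A : ValuationSubring K) : Type _ := IsLocalRing.ResidueField A

/-- `τ ∈ 𝔤^m(Kv)` is the element induced by `σ ∈ D_v^m` (i.e. `τ = σ_v`): for every
`v`-unit `x` one has `τ(x̄) = σ(x)`. -/
def Induces {m : ℕ∞} (A : ValuationSubring K) (σ : gal ℓ m K)
    (τ : gal ℓ m (resField A)) : Prop :=
  ∀ (x : Kˣ) (h : A.valuation (x : K) = 1),
    galApp τ (IsLocalRing.residue A ⟨(x : K), (A.valuation_le_one_iff (x : K)).mp h.le⟩) =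
      galu σ x

/-- An `m`-visible valuation. -/
def IsVisibleVal (ℓ : ℕ) [Fact ℓ.Prime] (m : ℕ∞) (A : ValuationSubring K) : Prop :=
  NoLDivConvex ℓ A ∧
  ¬ IsCSet (Set.univ : Set (gal ℓ m (resField A))) ∧
  ∀ B : ValuationSubring (resField A),
    decomp ℓ m B = Set.univ → inertia ℓ m B = {0}

/-- `Σ^⊥ = ∩_{σ ∈ Σ} ker σ ⊆ Kˣ`. -/
def orth {m : ℕ∞} (S : Set (gal ℓ m K)) : Set Kˣ :=
  {x | ∀ σ ∈ S, galu σ x = 0}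

/-- `σ` is valuative: `σ ∈ I_v^m` for some valuation `v` of `K`. -/
def IsValuative {m : ℕ∞} (σ : gal ℓ m K) : Prop :=
  ∃ A : ValuationSubring K, σ ∈ inertia ℓ m A

/-- `V = v_σ` is the coarsest valuation with `σ ∈ I_V^m`. -/
def IsVsigma {m : ℕ∞} (σ : gal ℓ m K) (V : ValuationSubring K) : Prop :=
  σ ∈ inertia ℓ m V ∧ ∀ W : ValuationSubring K, σ ∈ inertia ℓ m W → W ≤ V

/-- `V = v_Σ` is the coarsest valuation with `Σ ⊆ I_V^m`. -/
def IsVSet {m : ℕ∞} (S : Set (gal ℓ m K)) (V : ValuationSubring K) : Prop :=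
  S ⊆ inertia ℓ m V ∧ ∀ W : ValuationSubring K, S ⊆ inertia ℓ m W → W ≤ V

/-- The set `D^m_n(Σ)`. -/
def Dmn (n m : ℕ∞) (S : Set (gal ℓ n K)) : Set (gal ℓ n K) :=
  {τ | ∀ σ ∈ S, ∃ τ₁ τ₂ : gal ℓ n K, ∃ σ' τ' τ₁' τ₂' : gal ℓ m K,
    galProj m n σ' = σ ∧ galProj m n τ' = τ ∧ galProj m n τ₁' = τ₁ ∧ galProj m n τ₂' = τ₂ ∧
    ¬ IsCPair τ₁ τ₂ ∧ IsCPair σ' τ' ∧ IsCPair σ' τ₁' ∧ IsCPair σ' τ₂'}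

/-- The set `I^m_n(Σ)`. -/
def Imn (n m : ℕ∞) (S : Set (gal ℓ n K)) : Set (gal ℓ n K) :=
  {σ | σ ∈ S ∧ ∃ σ' : gal ℓ m K, galProj m n σ' = σ ∧
    ∀ τ ∈ S, ∃ τ' : gal ℓ m K, galProj m n τ' = τ ∧ IsCPair σ' τ'}

/-- `K` is a function field over `k`, i.e. a finitely generated field extension. -/
def IsFunctionField (k K : Type*) [Field k] [Field K] [Algebra k K] : Prop :=
  ∃ s : Finset K, IntermediateField.adjoin k (s : Set K) = ⊤

/-- `trdeg(K|k) = d`. -/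
def HasTrdeg (k K : Type*) [Field k] [Field K] [Algebra k K] (d : ℕ) : Prop :=
  ∃ b : Fin d → K, IsTranscendenceBasis k b


/-- The set `ℓ^n·𝔤^m(K)` (interpreted as the trivial subgroup when `n = ∞`). -/
def lPowSet (ℓ : ℕ) [Fact ℓ.Prime] (m : ℕ∞) (K : Type*) [Field K] : ℕ∞ → Set (gal ℓ m K)
  | ⊤ => {0}
  | (k : ℕ) => {x | ∃ σ : gal ℓ m K, x = galSmul ((ℓ : Lam ℓ m) ^ k) σ}

end

section VSigmaAux

variable {ℓ : ℕ} [Fact ℓ.Prime] {K : Type*} [Field K] {m : ℕ∞}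

namespace VSigma

/-! ### Generalities on ordered groups with zero -/

theorem inv_antitone {Γ : Type*} [LinearOrderedCommGroupWithZero Γ] {a b : Γ}
    (ha : a ≠ 0) (hb : b ≠ 0) (h : a ≤ b) : b⁻¹ ≤ a⁻¹ := by
  have h2 := mul_le_mul_left (mul_le_mul_left h a⁻¹) b⁻¹
  rwa [mul_inv_cancel₀ ha, one_mul, mul_right_comm, mul_inv_cancel₀ hb, one_mul] at h2

theorem one_le_inv' {Γ : Type*} [LinearOrderedCommGroupWithZero Γ] {a : Γ}
    (ha : a ≠ 0) (h : a ≤ 1) : 1 ≤ a⁻¹ := by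
  simpa using inv_antitone ha one_ne_zero h

theorem inv_le_one' {Γ : Type*} [LinearOrderedCommGroupWithZero Γ] {a : Γ}
    (ha : a ≠ 0) (h : 1 ≤ a) : a⁻¹ ≤ 1 := by
  simpa using inv_antitone one_ne_zero ha h

theorem le_inv_swap {Γ : Type*} [LinearOrderedCommGroupWithZero Γ] {a b : Γ}
    (ha : a ≠ 0) (hb : b ≠ 0) (h : a ≤ b⁻¹) : b ≤ a⁻¹ := by
  have := inv_antitone ha (inv_ne_zero hb) h
  rwa [inv_inv] at this

/-! ### The subgroup `orth S` -/

theorem one_mem_orth (S : Set (gal ℓ m K)) : (1 : Kˣ) ∈ orth S := by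
  intro σ hσ
  simp [galu]

theorem mul_mem_orth {S : Set (gal ℓ m K)} {a b : Kˣ} (ha : a ∈ orth S) (hb : b ∈ orth S) :
    a * b ∈ orth S := by
  intro σ hσ
  have h : galu σ (a * b) = galu σ a + galu σ b := by
    simp only [galu, ofMul_mul, map_add]
  rw [h, ha σ hσ, hb σ hσ, add_zero]

theorem inv_mem_orth {S : Set (gal ℓ m K)} {a : Kˣ} (ha : a ∈ orth S) : a⁻¹ ∈ orth S := by
  intro σ hσ
  have h : galu σ a⁻¹ = - galu σ a := by
    simp only [galu, ofMul_inv, map_neg]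
  rw [h, ha σ hσ, neg_zero]

/-- The intrinsic candidate unit group. -/
def Tset (S : Set (gal ℓ m K)) : Set Kˣ :=
  {t | t ∈ orth S ∧ ∀ x : Kˣ, x ∉ orth S →
      ∃ u ∈ orth S, (t : K) - (x : K) = (1 - (x : K)) * (u : K)}

/-- `γ` is realized as the value of an element of `orth S`. -/
def InH (S : Set (gal ℓ m K)) (W : ValuationSubring K) (γ : W.ValueGroup) : Prop :=
  ∃ x ∈ orth S, W.valuation (x : K) = γ

theorem wne (W : ValuationSubring K) (x : Kˣ) : W.valuation (x : K) ≠ 0 :=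
  (Valuation.ne_zero_iff _).mpr x.ne_zero

theorem InH_inv {S : Set (gal ℓ m K)} {W : ValuationSubring K} {γ : W.ValueGroup}
    (h : InH S W γ) : InH S W γ⁻¹ := by
  obtain ⟨x, hx, hval⟩ := h
  exact ⟨x⁻¹, inv_mem_orth hx, by rw [Units.val_inv_eq_inv_val, map_inv₀, hval]⟩

theorem InH_mul {S : Set (gal ℓ m K)} {W : ValuationSubring K} {γ γ' : W.ValueGroup}
    (h : InH S W γ) (h' : InH S W γ') : InH S W (γ * γ') := by
  obtain ⟨x, hx, hval⟩ := h
  obtain ⟨y, hy, hval'⟩ := h'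
  exact ⟨x * y, mul_mem_orth hx hy, by rw [Units.val_mul, map_mul, hval, hval']⟩

theorem unit_mem_orth {S : Set (gal ℓ m K)} {W : ValuationSubring K}
    (hW : S ⊆ inertia ℓ m W) {x : Kˣ} (hx : W.valuation (x : K) = 1) : x ∈ orth S :=
  fun σ hσ => hW hσ x hx

/-! ### Units of a valuation subring -/

theorem val_eq_one_iff' (A : ValuationSubring K) (t : Kˣ) :
    A.valuation (t : K) = 1 ↔ ((t : K) ∈ A ∧ ((t : K))⁻¹ ∈ A) := by
  constructor
  · intro h
    refine ⟨(A.valuation_le_one_iff _).mp h.le, (A.valuation_le_one_iff _).mp ?_⟩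
    rw [map_inv₀, h, inv_one]
  · rintro ⟨h1, h2⟩
    have h1' := (A.valuation_le_one_iff _).mpr h1
    have h2' := (A.valuation_le_one_iff _).mpr h2
    rw [map_inv₀] at h2'
    refine le_antisymm h1' ?_
    have := le_inv_swap (inv_ne_zero (wne A t)) one_ne_zero (by simpa using h2')
    simpa using this

/-! ### The coarsening associated to a convex subgroup -/

/-- The coarsening of `W` along a subgroup `Δ` of the value group. -/
def coars (W : ValuationSubring K) (Δ : Subgroup (W.ValueGroup)ˣ) : ValuationSubring K where
  carrier := {y : K | ∃ δ ∈ Δ, W.valuation y ≤ (δ : W.ValueGroup)}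
  zero_mem' := ⟨1, one_mem _, by simp⟩
  one_mem' := ⟨1, one_mem _, by simp⟩
  add_mem' := by
    rintro a b ⟨δ₁, hδ₁, h1⟩ ⟨δ₂, hδ₂, h2⟩
    rcases le_total ((δ₁ : W.ValueGroup)) ((δ₂ : W.ValueGroup)) with h | h
    · exact ⟨δ₂, hδ₂, le_trans (Valuation.map_add _ _ _) (max_le (h1.trans h) h2)⟩
    · exact ⟨δ₁, hδ₁, le_trans (Valuation.map_add _ _ _) (max_le h1 (h2.trans h))⟩
  mul_mem' := by
    rintro a b ⟨δ₁, hδ₁, h1⟩ ⟨δ₂, hδ₂, h2⟩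
    exact ⟨δ₁ * δ₂, mul_mem hδ₁ hδ₂, by
      rw [map_mul, Units.val_mul]; exact mul_le_mul' h1 h2⟩
  neg_mem' := by
    rintro a ⟨δ, hδ, h⟩
    exact ⟨δ, hδ, by rwa [Valuation.map_neg]⟩
  mem_or_inv_mem' := by
    intro x
    rcases le_total (W.valuation x) 1 with h | h
    · exact Or.inl ⟨1, one_mem _, by simpa using h⟩
    · refine Or.inr ⟨1, one_mem _, ?_⟩
      rcases eq_or_ne x 0 with rfl | hx
      · simp
      · rw [map_inv₀, Units.val_one]
        exact inv_le_one' ((Valuation.ne_zero_iff _).mpr hx) h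

theorem mem_coars {W : ValuationSubring K} {Δ : Subgroup (W.ValueGroup)ˣ} {y : K} :
    y ∈ coars W Δ ↔ ∃ δ ∈ Δ, W.valuation y ≤ (δ : W.ValueGroup) := Iff.rfl

theorem le_coars (W : ValuationSubring K) (Δ : Subgroup (W.ValueGroup)ˣ) : W ≤ coars W Δ :=
  fun y hy => ⟨1, one_mem _, by simpa using (W.valuation_le_one_iff y).mpr hy⟩

/-! ### Units of the coarsening are in `Tset` -/

theorem coars_unit_mem_orth {S : Set (gal ℓ m K)} {W : ValuationSubring K}
    (hW : S ⊆ inertia ℓ m W) {Δ : Subgroup (W.ValueGroup)ˣ} (hconv : IsConvexSub Δ)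
    (hH : ∀ δ ∈ Δ, InH S W (δ : W.ValueGroup)) {t : Kˣ}
    (h1 : (t : K) ∈ coars W Δ) (h2 : ((t : K))⁻¹ ∈ coars W Δ) : t ∈ orth S := by
  obtain ⟨δ, hδ, hle⟩ := h1
  obtain ⟨δ', hδ', hle'⟩ := h2
  rw [map_inv₀] at hle'
  have hγΔ : Units.mk0 (W.valuation (t : K)) (wne W t) ∈ Δ := by
    rcases le_total (1 : W.ValueGroup) (W.valuation (t : K)) with h | h
    · exact hconv _ δ h hle hδ
    · have hmem : (Units.mk0 (W.valuation (t : K)) (wne W t))⁻¹ ∈ Δ := by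
        refine hconv _ δ' ?_ ?_ hδ'
        · rw [Units.val_inv_eq_inv_val]
          exact one_le_inv' (wne W t) h
        · rw [Units.val_inv_eq_inv_val]
          exact hle'
      simpa using Δ.inv_mem hmem
  obtain ⟨s, hs, hsval⟩ := hH _ hγΔ
  have hts : t * s⁻¹ ∈ orth S := by
    refine unit_mem_orth hW ?_
    rw [Units.val_mul, map_mul, Units.val_inv_eq_inv_val, map_inv₀, hsval]
    exact mul_inv_cancel₀ (wne W t)
  simpa using mul_mem_orth hts hs

theorem coars_unit_mem_T {S : Set (gal ℓ m K)} {W : ValuationSubring K}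
    (hW : S ⊆ inertia ℓ m W) {Δ : Subgroup (W.ValueGroup)ˣ} (hconv : IsConvexSub Δ)
    (hH : ∀ δ ∈ Δ, InH S W (δ : W.ValueGroup)) {t : Kˣ}
    (h1 : (t : K) ∈ coars W Δ) (h2 : ((t : K))⁻¹ ∈ coars W Δ) : t ∈ Tset S := by
  have htorth := coars_unit_mem_orth hW hconv hH h1 h2
  refine ⟨htorth, fun x hx => ?_⟩
  set A := coars W Δ with hA
  have hAt : A.valuation (t : K) = 1 := (val_eq_one_iff' A t).mpr ⟨h1, h2⟩
  have hAx : A.valuation (x : K) ≠ 1 := by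
    intro h
    obtain ⟨hm1, hm2⟩ := (val_eq_one_iff' A x).mp h
    exact hx (coars_unit_mem_orth hW hconv hH hm1 hm2)
  have hx1 : (x : K) ≠ 1 := by
    intro h
    exact hx ((Units.ext h : x = 1) ▸ one_mem_orth S)
  have htx : (t : K) ≠ (x : K) := fun h => hx ((Units.ext h : t = x) ▸ htorth)
  have hne1 : (1 : K) - (x : K) ≠ 0 := sub_ne_zero.mpr (Ne.symm hx1)
  have hnet : (t : K) - (x : K) ≠ 0 := sub_ne_zero.mpr htx
  have hu0 : A.valuation (((t : K) - (x : K)) / (1 - (x : K))) = 1 := by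
    rw [map_div₀]
    rcases lt_or_gt_of_ne hAx with h | h
    · rw [Valuation.map_sub_eq_of_lt_left _ (by rw [hAt]; exact h),
        A.valuation.map_one_sub_of_lt h, hAt, div_one]
    · have h1x : A.valuation ((1 : K) - (x : K)) = A.valuation (x : K) := by
        rw [show (1 : K) - (x : K) = -((x : K) - 1) from by ring, Valuation.map_neg,
          Valuation.map_sub_eq_of_lt_left _ (by simpa using h)]
      have htxv : A.valuation ((t : K) - (x : K)) = A.valuation (x : K) := by
        rw [show (t : K) - (x : K) = -((x : K) - (t : K)) from by ring, Valuation.map_neg,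
          Valuation.map_sub_eq_of_lt_left _ (by rw [hAt]; exact h)]
      rw [htxv, h1x, div_self (wne A x)]
  set u : Kˣ := Units.mk0 _ (div_ne_zero hnet hne1) with hu
  obtain ⟨hm1, hm2⟩ := (val_eq_one_iff' A u).mp hu0
  refine ⟨u, coars_unit_mem_orth hW hconv hH hm1 hm2, ?_⟩
  show (t : K) - (x : K) = (1 - (x : K)) * (((t : K) - (x : K)) / (1 - (x : K)))
  rw [mul_comm]
  exact (div_mul_cancel₀ _ hne1).symm

/-! ### Elements of `Tset` generate convex subgroups inside the image of `orth S` -/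

theorem key_mem {S : Set (gal ℓ m K)} {W : ValuationSubring K}
    (hW : S ⊆ inertia ℓ m W) {t : Kˣ} (ht : t ∈ Tset S) {x : Kˣ}
    (hmin : min (W.valuation (t : K)) 1 ≤ W.valuation (x : K))
    (hmax : W.valuation (x : K) ≤ max (W.valuation (t : K)) 1) :
    InH S W (W.valuation (x : K)) := by
  by_cases hxo : x ∈ orth S
  · exact ⟨x, hxo, rfl⟩
  have hx1 : W.valuation (x : K) ≠ 1 := fun h => hxo (unit_mem_orth hW h)
  by_cases hxt : W.valuation (x : K) = W.valuation (t : K)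
  · exact ⟨t, ht.1, hxt.symm⟩
  obtain ⟨u, hu, hequ⟩ := ht.2 x hxo
  rcases le_total 1 (W.valuation (t : K)) with hwt | hwt
  · rw [min_eq_right hwt] at hmin
    rw [max_eq_left hwt] at hmax
    have hxgt : 1 < W.valuation (x : K) := lt_of_le_of_ne hmin (Ne.symm hx1)
    have hxlt : W.valuation (x : K) < W.valuation (t : K) := lt_of_le_of_ne hmax hxt
    have h1x : W.valuation ((1 : K) - (x : K)) = W.valuation (x : K) := by
      rw [show (1 : K) - (x : K) = -((x : K) - 1) from by ring, Valuation.map_neg]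
      exact Valuation.map_sub_eq_of_lt_left _ (by simpa using hxgt)
    have htx : W.valuation ((t : K) - (x : K)) = W.valuation (t : K) :=
      Valuation.map_sub_eq_of_lt_left _ hxlt
    rw [hequ, map_mul, h1x] at htx
    refine ⟨t * u⁻¹, mul_mem_orth ht.1 (inv_mem_orth hu), ?_⟩
    rw [Units.val_mul, map_mul, Units.val_inv_eq_inv_val, map_inv₀, ← htx, mul_assoc, mul_inv_cancel₀ (wne W u), mul_one]
  · rw [min_eq_left hwt] at hmin
    rw [max_eq_right hwt] at hmax
    have hxlt1 : W.valuation (x : K) < 1 := lt_of_le_of_ne hmax hx1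
    have htlt : W.valuation (t : K) < W.valuation (x : K) := lt_of_le_of_ne hmin (fun h => hxt h.symm)
    have h1x : W.valuation ((1 : K) - (x : K)) = 1 :=
      W.valuation.map_one_sub_of_lt hxlt1
    have htx : W.valuation ((t : K) - (x : K)) = W.valuation (x : K) := by
      rw [show (t : K) - (x : K) = -((x : K) - (t : K)) from by ring, Valuation.map_neg]
      exact Valuation.map_sub_eq_of_lt_left _ htlt
    rw [hequ, map_mul, h1x, one_mul] at htx
    exact ⟨u, hu, htx⟩

theorem pow_mem {S : Set (gal ℓ m K)} {W : ValuationSubring K}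
    (hW : S ⊆ inertia ℓ m W) {t : Kˣ} (ht : t ∈ Tset S) :
    ∀ n : ℕ, ∀ x : Kˣ, 1 ≤ W.valuation (x : K) →
      W.valuation (x : K) ≤ (max (W.valuation (t : K)) (W.valuation (t : K))⁻¹) ^ n →
      InH S W (W.valuation (x : K)) := by
  have hane : W.valuation (t : K) ≠ 0 := wne W t
  set a := W.valuation (t : K) with ha
  set A := max a a⁻¹ with hA
  have hAne : A ≠ 0 := fun h => hane (by
    have := le_max_left a a⁻¹
    rw [← hA, h] at this
    exact le_antisymm this (zero_le' ))
  have hA1 : (1 : W.ValueGroup) ≤ A := by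
    rcases le_total 1 a with h | h
    · exact le_trans h (le_max_left _ _)
    · exact le_trans (one_le_inv' hane h) (le_max_right _ _)
  intro n
  induction n with
  | zero =>
    intro x h1 h2
    rw [pow_zero] at h2
    exact ⟨x, unit_mem_orth hW (le_antisymm h2 h1), rfl⟩
  | succ n ih =>
    intro x h1 h2
    rcases le_total (W.valuation (x : K)) A with hc | hc
    · rcases le_total 1 a with hta | hta
      · have hAa : A = a := max_eq_left (le_trans (inv_le_one' hane hta) hta)
        refine key_mem hW ht ?_ ?_
        · rw [min_eq_right hta]; exact h1
        · rw [max_eq_left hta]; exact hAa ▸ hc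
      · have hAa : A = a⁻¹ := max_eq_right (le_trans hta (one_le_inv' hane hta))
        have hinv : InH S W (W.valuation ((x⁻¹ : Kˣ) : K)) := by
          refine key_mem hW ht ?_ ?_
          · rw [min_eq_left hta, Units.val_inv_eq_inv_val, map_inv₀]
            exact le_inv_swap (wne W x) hane (by rw [← hAa]; exact hc)
          · rw [max_eq_right hta, Units.val_inv_eq_inv_val, map_inv₀]
            exact inv_le_one' (wne W x) h1
        rw [Units.val_inv_eq_inv_val, map_inv₀] at hinv
        have h3 := InH_inv hinv
        rwa [inv_inv] at h3
    · obtain ⟨s, hs, hsval⟩ : ∃ s ∈ orth S, W.valuation (s : K) = A := by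
        rcases max_choice a a⁻¹ with h | h
        · exact ⟨t, ht.1, by rw [hA, h, ha]⟩
        · refine ⟨t⁻¹, inv_mem_orth ht.1, ?_⟩
          rw [Units.val_inv_eq_inv_val, map_inv₀, hA, h, ha]
      have hxs : W.valuation ((x * s⁻¹ : Kˣ) : K) = W.valuation (x : K) * A⁻¹ := by
        rw [Units.val_mul, map_mul, Units.val_inv_eq_inv_val, map_inv₀, hsval]
      have hxs1 : 1 ≤ W.valuation ((x * s⁻¹ : Kˣ) : K) := by
        rw [hxs]
        have := mul_le_mul_left hc A⁻¹
        rwa [mul_inv_cancel₀ hAne] at this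
      have hxs2 : W.valuation ((x * s⁻¹ : Kˣ) : K) ≤ A ^ n := by
        rw [hxs]
        have := mul_le_mul_left h2 A⁻¹
        rwa [pow_succ, mul_assoc, mul_inv_cancel₀ hAne, mul_one] at this
      have hmul := InH_mul (ih (x * s⁻¹) hxs1 hxs2) (⟨s, hs, hsval⟩ : InH S W A)
      rw [hxs, mul_assoc, inv_mul_cancel₀ hAne, mul_one] at hmul
      exact hmul

/-! ### The convex subgroup generated by `w t` -/

/-- The convex subgroup of the value group generated by the value of `t`. -/
def convexGen (W : ValuationSubring K) (t : Kˣ) : Subgroup (W.ValueGroup)ˣ where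
  carrier := {γ | ∃ n : ℕ,
    (γ : W.ValueGroup) ≤ (max (W.valuation (t : K)) (W.valuation (t : K))⁻¹) ^ n ∧
    ((max (W.valuation (t : K)) (W.valuation (t : K))⁻¹) ^ n)⁻¹ ≤ (γ : W.ValueGroup)}
  one_mem' := ⟨0, by simp⟩
  mul_mem' := by
    rintro γ γ' ⟨n, hu, hl⟩ ⟨n', hu', hl'⟩
    refine ⟨n + n', ?_, ?_⟩
    · rw [Units.val_mul, pow_add]
      exact mul_le_mul' hu hu'
    · rw [Units.val_mul, pow_add, mul_inv]
      exact mul_le_mul' hl hl'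
  inv_mem' := by
    rintro γ ⟨n, hu, hl⟩
    have hMne : (max (W.valuation (t : K)) (W.valuation (t : K))⁻¹) ^ n ≠ 0 :=
      pow_ne_zero _ (fun h => (wne W t) (le_antisymm (by rw [← h]; exact le_max_left _ _) zero_le'))
    refine ⟨n, ?_, ?_⟩
    · rw [Units.val_inv_eq_inv_val]
      have := inv_antitone (inv_ne_zero hMne) γ.ne_zero hl
      rwa [inv_inv] at this
    · rw [Units.val_inv_eq_inv_val]
      exact inv_antitone γ.ne_zero hMne hu

theorem convexGen_convex (W : ValuationSubring K) (t : Kˣ) : IsConvexSub (convexGen W t) := by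
  have hane : W.valuation (t : K) ≠ 0 := wne W t
  have hA1 : (1 : W.ValueGroup) ≤ max (W.valuation (t : K)) (W.valuation (t : K))⁻¹ := by
    rcases le_total 1 (W.valuation (t : K)) with h | h
    · exact le_trans h (le_max_left _ _)
    · exact le_trans (one_le_inv' hane h) (le_max_right _ _)
  rintro γ c h1 h2 ⟨n, hu, hl⟩
  refine ⟨n, le_trans h2 hu, le_trans ?_ h1⟩
  exact inv_le_one' (pow_ne_zero _ (fun h => hane (le_antisymm (by rw [← h]; exact le_max_left _ _) zero_le')))
    (Left.one_le_pow_of_le hA1 n)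

theorem mem_convexGen_self (W : ValuationSubring K) (t : Kˣ) :
    Units.mk0 (W.valuation (t : K)) (wne W t) ∈ convexGen W t := by
  have hane : W.valuation (t : K) ≠ 0 := wne W t
  refine ⟨1, ?_, ?_⟩
  · rw [pow_one]
    exact le_max_left _ _
  · rw [pow_one]
    have := inv_antitone (inv_ne_zero hane)
      (fun h => hane (le_antisymm (by rw [← h]; exact le_max_left _ _) zero_le'))
      (le_max_right _ _)
    rwa [inv_inv] at this

theorem convexGen_subset {S : Set (gal ℓ m K)} {W : ValuationSubring K}
    (hW : S ⊆ inertia ℓ m W) {t : Kˣ} (ht : t ∈ Tset S) :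
    ∀ γ ∈ convexGen W t, InH S W (γ : W.ValueGroup) := by
  have main : ∀ γ ∈ convexGen W t, (1 : W.ValueGroup) ≤ (γ : W.ValueGroup) →
      InH S W (γ : W.ValueGroup) := by
    rintro γ ⟨n, hu, _⟩ h1
    obtain ⟨x, hx⟩ := W.valuation_surjective (γ : W.ValueGroup)
    have hx0 : x ≠ 0 := by
      intro h
      rw [h, map_zero] at hx
      exact γ.ne_zero hx.symm
    have h2 := pow_mem hW ht n (Units.mk0 x hx0) (by rw [Units.val_mk0, hx]; exact h1)
      (by rw [Units.val_mk0, hx]; exact hu)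
    rwa [Units.val_mk0, hx] at h2
  intro γ hγ
  rcases le_total (1 : W.ValueGroup) (γ : W.ValueGroup) with h | h
  · exact main γ hγ h
  · have h2 := main γ⁻¹ ((convexGen W t).inv_mem hγ)
      (by rw [Units.val_inv_eq_inv_val]; exact one_le_inv' γ.ne_zero h)
    rw [Units.val_inv_eq_inv_val] at h2
    have h3 := InH_inv h2
    rwa [inv_inv] at h3

/-! ### Convex subgroups form a chain; the maximal convex subgroup inside `w(orth S)` -/

theorem convex_le_or_le {Γ : Type*} [LinearOrderedCommGroupWithZero Γ]
    {C₁ C₂ : Subgroup Γˣ} (h1 : IsConvexSub C₁) (h2 : IsConvexSub C₂) :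
    C₁ ≤ C₂ ∨ C₂ ≤ C₁ := by
  by_cases hc : C₁ ≤ C₂
  · exact Or.inl hc
  right
  obtain ⟨c₁, hc₁, hc₁'⟩ : ∃ c₁ ∈ C₁, c₁ ∉ C₂ := by
    by_contra h
    push_neg at h
    exact hc fun x hx => h x hx
  obtain ⟨d₁, hd₁C, hd₁n, hd₁1⟩ : ∃ d₁, d₁ ∈ C₁ ∧ d₁ ∉ C₂ ∧ (1 : Γ) ≤ (d₁ : Γ) := by
    rcases le_total (1 : Γ) (c₁ : Γ) with h | h
    · exact ⟨c₁, hc₁, hc₁', h⟩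
    · refine ⟨c₁⁻¹, C₁.inv_mem hc₁, fun hmem => hc₁' (by simpa using C₂.inv_mem hmem), ?_⟩
      rw [Units.val_inv_eq_inv_val]
      exact one_le_inv' c₁.ne_zero h
  intro c₂ hc₂
  suffices h : ∀ e ∈ C₂, (1 : Γ) ≤ (e : Γ) → e ∈ C₁ by
    rcases le_total (1 : Γ) (c₂ : Γ) with hh | hh
    · exact h c₂ hc₂ hh
    · have := h c₂⁻¹ (C₂.inv_mem hc₂)
        (by rw [Units.val_inv_eq_inv_val]; exact one_le_inv' c₂.ne_zero hh)
      simpa using C₁.inv_mem this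
  intro e he he1
  rcases le_total (e : Γ) (d₁ : Γ) with hh | hh
  · exact h1 e d₁ he1 hh hd₁C
  · exact absurd (h2 d₁ e hd₁1 hh he) hd₁n

/-- The maximal convex subgroup of the value group contained in `w(orth S)`. -/
def maxConvex (S : Set (gal ℓ m K)) (W : ValuationSubring K) : Subgroup (W.ValueGroup)ˣ where
  carrier := {γ | ∃ C : Subgroup (W.ValueGroup)ˣ, IsConvexSub C ∧
      (∀ δ ∈ C, InH S W (δ : W.ValueGroup)) ∧ γ ∈ C}
  one_mem' := by
    refine ⟨⊥, ?_, ?_, one_mem ⊥⟩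
    · intro γ c h1 h2 hcb
      rw [Subgroup.mem_bot] at hcb
      subst hcb
      rw [Subgroup.mem_bot]
      ext
      rw [Units.val_one]
      exact le_antisymm (by simpa using h2) h1
    · intro δ hδ
      rw [Subgroup.mem_bot] at hδ
      subst hδ
      exact ⟨1, one_mem_orth S, by simp⟩
  mul_mem' := by
    rintro a b ⟨C, hC, hCH, haC⟩ ⟨D, hD, hDH, hbD⟩
    rcases convex_le_or_le hC hD with h | h
    · exact ⟨D, hD, hDH, D.mul_mem (h haC) hbD⟩
    · exact ⟨C, hC, hCH, C.mul_mem haC (h hbD)⟩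
  inv_mem' := by
    rintro a ⟨C, hC, hCH, haC⟩
    exact ⟨C, hC, hCH, C.inv_mem haC⟩

theorem maxConvex_convex (S : Set (gal ℓ m K)) (W : ValuationSubring K) :
    IsConvexSub (maxConvex S W) := by
  rintro γ c h1 h2 ⟨C, hC, hCH, hcC⟩
  exact ⟨C, hC, hCH, hC γ c h1 h2 hcC⟩

theorem maxConvex_subset (S : Set (gal ℓ m K)) (W : ValuationSubring K) :
    ∀ δ ∈ maxConvex S W, InH S W (δ : W.ValueGroup) := by
  rintro δ ⟨C, _, hCH, hδ⟩
  exact hCH δ hδ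

theorem le_maxConvex (S : Set (gal ℓ m K)) (W : ValuationSubring K)
    {C : Subgroup (W.ValueGroup)ˣ} (hC : IsConvexSub C)
    (hCH : ∀ δ ∈ C, InH S W (δ : W.ValueGroup)) : C ≤ maxConvex S W :=
  fun γ hγ => ⟨C, hC, hCH, hγ⟩

/-! ### The main unit-group identification -/

theorem T_mem_coars {S : Set (gal ℓ m K)} {W : ValuationSubring K}
    (hW : S ⊆ inertia ℓ m W) {Δ : Subgroup (W.ValueGroup)ˣ}
    (hmax : ∀ C : Subgroup (W.ValueGroup)ˣ, IsConvexSub C →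
      (∀ δ ∈ C, InH S W (δ : W.ValueGroup)) → C ≤ Δ) {t : Kˣ} (ht : t ∈ Tset S) :
    (t : K) ∈ coars W Δ ∧ ((t : K))⁻¹ ∈ coars W Δ := by
  have hγ : Units.mk0 (W.valuation (t : K)) (wne W t) ∈ Δ :=
    hmax _ (convexGen_convex W t) (convexGen_subset hW ht) (mem_convexGen_self W t)
  refine ⟨⟨_, hγ, le_rfl⟩, ⟨_, Δ.inv_mem hγ, ?_⟩⟩
  rw [map_inv₀, Units.val_inv_eq_inv_val, Units.val_mk0]

theorem coars_val_one_iff {S : Set (gal ℓ m K)} {W : ValuationSubring K}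
    (hW : S ⊆ inertia ℓ m W) {Δ : Subgroup (W.ValueGroup)ˣ} (hconv : IsConvexSub Δ)
    (hH : ∀ δ ∈ Δ, InH S W (δ : W.ValueGroup))
    (hmax : ∀ C : Subgroup (W.ValueGroup)ˣ, IsConvexSub C →
      (∀ δ ∈ C, InH S W (δ : W.ValueGroup)) → C ≤ Δ) (t : Kˣ) :
    (coars W Δ).valuation (t : K) = 1 ↔ t ∈ Tset S := by
  rw [val_eq_one_iff']
  constructor
  · rintro ⟨h1, h2⟩
    exact coars_unit_mem_T hW hconv hH h1 h2
  · exact T_mem_coars hW hmax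

theorem subset_inertia_coars {S : Set (gal ℓ m K)} {W : ValuationSubring K}
    (hW : S ⊆ inertia ℓ m W) {Δ : Subgroup (W.ValueGroup)ˣ} (hconv : IsConvexSub Δ)
    (hH : ∀ δ ∈ Δ, InH S W (δ : W.ValueGroup)) : S ⊆ inertia ℓ m (coars W Δ) := by
  intro σ hσ
  intro x hx
  obtain ⟨h1, h2⟩ := (val_eq_one_iff' _ x).mp hx
  exact coars_unit_mem_orth hW hconv hH h1 h2 σ hσ

/-! ### A valuation subring is determined by its unit group -/

theorem le_of_unit_imp {A B : ValuationSubring K}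
    (h : ∀ t : Kˣ, A.valuation (t : K) = 1 → B.valuation (t : K) = 1) : A ≤ B := by
  intro y hy
  by_cases hy0 : y = 0
  · rw [hy0]; exact zero_mem B
  rw [← B.valuation_le_one_iff]
  by_contra hgt
  push_neg at hgt
  have hyA : A.valuation y ≤ 1 := (A.valuation_le_one_iff y).mpr hy
  rcases eq_or_lt_of_le hyA with heq | hlt
  · exact absurd (h (Units.mk0 y hy0) heq).le (not_le.mpr hgt)
  · have hy1 : y ≠ 1 := by
      intro h'
      rw [h', map_one] at hlt
      exact lt_irrefl _ hlt
    have h1y : A.valuation (1 - y) = 1 := A.valuation.map_one_sub_of_lt hlt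
    have hB : B.valuation (1 - y) = 1 := h (Units.mk0 (1 - y) (sub_ne_zero.mpr (Ne.symm hy1))) h1y
    have heqB : B.valuation (1 - y) = B.valuation y := by
      rw [show (1 : K) - y = -(y - 1) from by ring, Valuation.map_neg]
      exact Valuation.map_sub_eq_of_lt_left _ (by simpa using hgt)
    rw [heqB] at hB
    exact (ne_of_gt hgt).symm hB.symm

theorem eq_of_unit_iff {A B : ValuationSubring K}
    (h : ∀ t : Kˣ, A.valuation (t : K) = 1 ↔ B.valuation (t : K) = 1) : A = B :=
  le_antisymm (le_of_unit_imp fun t ht => (h t).mp ht)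
    (le_of_unit_imp fun t ht => (h t).mpr ht)

end VSigma

end VSigmaAux

/-- Existence and description of the coarsest valuation `v_Σ` associated to a
valuative subset `Σ`. -/
theorem stmt12 (ℓ : ℕ) [Fact ℓ.Prime] (m : ℕ∞) (hm : 1 ≤ m) (K : Type*) [Field K]
    (S : Set (gal ℓ m K)) (hval : ∃ W : ValuationSubring K, S ⊆ inertia ℓ m W) :
    (∃! V : ValuationSubring K, S ⊆ inertia ℓ m V ∧
      ∀ W : ValuationSubring K, S ⊆ inertia ℓ m W → W ≤ V) ∧
    (∀ V : ValuationSubring K,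
      (S ⊆ inertia ℓ m V ∧ ∀ W : ValuationSubring K, S ⊆ inertia ℓ m W → W ≤ V) →
      (∀ t : Kˣ, V.valuation (t : K) = 1 ↔
        (t ∈ orth S ∧ ∀ x : Kˣ, x ∉ orth S →
          ∃ u ∈ orth S, (t : K) - (x : K) = (1 - (x : K)) * (u : K))) ∧
      (∀ W : ValuationSubring K, S ⊆ inertia ℓ m W →
        ∀ Δ : Subgroup (W.ValueGroup)ˣ, IsConvexSub Δ →
          (∀ δ ∈ Δ, ∃ x ∈ orth S, W.valuation (x : K) = (δ : W.ValueGroup)) →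
          (∀ Δ' : Subgroup (W.ValueGroup)ˣ, IsConvexSub Δ' →
            (∀ δ ∈ Δ', ∃ x ∈ orth S, W.valuation (x : K) = (δ : W.ValueGroup)) → Δ' ≤ Δ) →
          ∀ y : K, y ∈ V ↔ ∃ δ ∈ Δ, W.valuation y ≤ (δ : W.ValueGroup))) := by
  classical
  obtain ⟨W, hW⟩ := hval
  have hI₀ : S ⊆ inertia ℓ m (VSigma.coars W (VSigma.maxConvex S W)) :=
    VSigma.subset_inertia_coars hW (VSigma.maxConvex_convex S W) (VSigma.maxConvex_subset S W)
  have hunit : ∀ (W' : ValuationSubring K), S ⊆ inertia ℓ m W' →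
      ∀ (Δ' : Subgroup (W'.ValueGroup)ˣ), IsConvexSub Δ' →
      (∀ δ ∈ Δ', VSigma.InH S W' (δ : W'.ValueGroup)) →
      (∀ C : Subgroup (W'.ValueGroup)ˣ, IsConvexSub C →
        (∀ δ ∈ C, VSigma.InH S W' (δ : W'.ValueGroup)) → C ≤ Δ') →
      VSigma.coars W' Δ' = VSigma.coars W (VSigma.maxConvex S W) := by
    intro W' hW' Δ' hc hh hm
    apply VSigma.eq_of_unit_iff
    intro t
    rw [VSigma.coars_val_one_iff hW' hc hh hm t,
      VSigma.coars_val_one_iff hW (VSigma.maxConvex_convex S W) (VSigma.maxConvex_subset S W)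
        (fun C hC hCH => VSigma.le_maxConvex S W hC hCH) t]
  have hcoarsest : ∀ W' : ValuationSubring K, S ⊆ inertia ℓ m W' →
      W' ≤ VSigma.coars W (VSigma.maxConvex S W) := by
    intro W' hW'
    have h := hunit W' hW' (VSigma.maxConvex S W') (VSigma.maxConvex_convex S W')
      (VSigma.maxConvex_subset S W') (fun C hC hCH => VSigma.le_maxConvex S W' hC hCH)
    rw [← h]
    exact VSigma.le_coars W' _
  constructor
  · refine ⟨VSigma.coars W (VSigma.maxConvex S W), ⟨hI₀, hcoarsest⟩, ?_⟩
    rintro V ⟨h1, h2⟩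
    exact le_antisymm (hcoarsest V h1) (h2 _ hI₀)
  · rintro V ⟨h1, h2⟩
    have hVeq : V = VSigma.coars W (VSigma.maxConvex S W) :=
      le_antisymm (hcoarsest V h1) (h2 _ hI₀)
    constructor
    · intro t
      rw [hVeq]
      exact VSigma.coars_val_one_iff hW (VSigma.maxConvex_convex S W)
        (VSigma.maxConvex_subset S W) (fun C hC hCH => VSigma.le_maxConvex S W hC hCH) t
    · intro W₂ hW₂ Δ hΔc hΔH hΔmax y
      have h := hunit W₂ hW₂ Δ hΔc hΔH (fun C hC hCH => hΔmax C hC hCH)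
      rw [hVeq, ← h]
      exact VSigma.mem_coars
end

section
/- Let ℓ be a prime, m ∈ ℕ ∪ {∞} and M ≥ M_1(m). Let K be a field with μ_{2ℓ^M} ⊂ K, and let σ, τ ∈ 𝔤^m(K) be two valuative elements. Then the following are equivalent: (1) the valuations v_σ and v_τ are comparable; (2) there exist M-lifts σ', τ' ∈ 𝔤^M(K) of σ, τ such that (σ',τ') is a C-pair. -/
open Polynomial

namespace CP

/-- The additive map `ZMod (ℓ^m) →+ ZMod (ℓ^M)`, `x ↦ x̃ * ℓ^(M-m)`. -/
noncomputable def psi (ℓ m M : ℕ) [Fact ℓ.Prime] (hmM : m ≤ M) :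
    ZMod (ℓ^m) →+ ZMod (ℓ^M) :=
  ZMod.lift (ℓ^m) ⟨AddMonoidHom.mk' (fun k : ℤ => (k : ZMod (ℓ^M)) * (ℓ:ZMod (ℓ^M))^(M-m))
    (by intro x y; push_cast; ring), by
      show (((ℓ^m : ℕ) : ℤ) : ZMod (ℓ^M)) * (ℓ:ZMod (ℓ^M))^(M-m) = 0
      push_cast
      rw [← pow_add, Nat.add_sub_cancel' hmM]
      norm_cast
      exact ZMod.natCast_self _⟩

variable {ℓ : ℕ} [Fact ℓ.Prime]

lemma psi_intCast {m M : ℕ} (hmM : m ≤ M) (k : ℤ) :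
    psi ℓ m M hmM ((k : ZMod (ℓ^m))) = (k : ZMod (ℓ^M)) * (ℓ:ZMod (ℓ^M))^(M-m) := by
  simp [psi]

lemma psi_eq_zero_iff {m M : ℕ} (hmM : m ≤ M) (a : ZMod (ℓ^m)) :
    psi ℓ m M hmM a = 0 ↔ a = 0 := by
  have hl : ℓ ≠ 0 := (Fact.out : ℓ.Prime).ne_zero
  constructor
  · intro h
    obtain ⟨k, rfl⟩ := ZMod.intCast_surjective (n := ℓ^m) a
    rw [psi_intCast] at h
    have h2 : ((k * (ℓ:ℤ)^(M-m) : ℤ) : ZMod (ℓ^M)) = 0 := by push_cast; exact h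
    rw [ZMod.intCast_zmod_eq_zero_iff_dvd] at h2
    have hM : ((ℓ^M : ℕ) : ℤ) = (ℓ:ℤ)^m * (ℓ:ℤ)^(M-m) := by
      push_cast; rw [← pow_add, Nat.add_sub_cancel' hmM]
    rw [hM] at h2
    have hne : (ℓ:ℤ)^(M-m) ≠ 0 := pow_ne_zero _ (by exact_mod_cast hl)
    have h3 : (ℓ:ℤ)^m ∣ k := by
      rcases h2 with ⟨t, ht⟩
      exact ⟨t, mul_right_cancel₀ hne (by rw [ht]; ring)⟩
    rw [ZMod.intCast_zmod_eq_zero_iff_dvd]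
    push_cast
    exact h3
  · rintro rfl; simp

lemma psi_injective {m M : ℕ} (hmM : m ≤ M) : Function.Injective (psi ℓ m M hmM) := by
  intro a b hab
  have : psi ℓ m M hmM (a - b) = 0 := by rw [map_sub, hab, sub_self]
  exact sub_eq_zero.mp ((psi_eq_zero_iff hmM _).mp this)

lemma psi_cast {m M : ℕ} (hmM : m ≤ M) (y : ZMod (ℓ^M)) :
    psi ℓ m M hmM (ZMod.castHom (pow_dvd_pow ℓ hmM) (ZMod (ℓ^m)) y)
      = y * (ℓ:ZMod (ℓ^M))^(M-m) := by
  obtain ⟨k, rfl⟩ := ZMod.intCast_surjective (n := ℓ^M) y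
  rw [map_intCast, psi_intCast]


theorem zmod_div_pow {M e : ℕ} (he : e ≤ M) (β : ZMod (ℓ^M))
    (h : (ℓ:ZMod (ℓ^M))^(M-e) * β = 0) : ∃ c : ZMod (ℓ^M), (ℓ:ZMod (ℓ^M))^e * c = β := by
  have hl : ℓ ≠ 0 := (Fact.out : ℓ.Prime).ne_zero
  haveI : NeZero (ℓ^M) := ⟨pow_ne_zero _ hl⟩
  have hβ : ((β.val : ℕ) : ZMod (ℓ^M)) = β := (ZMod.natCast_val β).trans (ZMod.cast_id _ _)
  have h2 : (((ℓ^(M-e) * β.val : ℕ)) : ZMod (ℓ^M)) = 0 := by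
    push_cast
    rw [hβ]; exact h
  rw [ZMod.natCast_eq_zero_iff] at h2
  have h3 : ℓ^e ∣ β.val := by
    rcases h2 with ⟨t, ht⟩
    have ht' : ℓ^(M-e) * β.val = ℓ^(M-e) * (ℓ^e * t) := by
      have hpow : ℓ^(M-e) * ℓ^e = ℓ^M := by rw [← pow_add]; congr 1; omega
      rw [ht, ← hpow, mul_assoc]
    exact ⟨t, Nat.eq_of_mul_eq_mul_left (Nat.pos_of_ne_zero (pow_ne_zero _ hl)) ht'⟩
  refine ⟨((β.val / ℓ^e : ℕ) : ZMod (ℓ^M)), ?_⟩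
  calc (ℓ:ZMod (ℓ^M))^e * ((β.val / ℓ^e : ℕ) : ZMod (ℓ^M))
      = ((ℓ^e * (β.val / ℓ^e) : ℕ) : ZMod (ℓ^M)) := by push_cast; ring
    _ = β := by rw [Nat.mul_div_cancel' h3, hβ]

theorem lift_mod_exists (ℓ : ℕ) [Fact ℓ.Prime] {G : Type*} [AddCommGroup G]
    (m M : ℕ) (hmM : m ≤ M)
    (U : AddSubgroup G) (hsat : ∀ (x : G) (k : ℕ), (ℓ^k) • x ∈ U → x ∈ U)
    (f : G →+ ZMod (ℓ^m)) (hf : ∀ u ∈ U, f u = 0) :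
    ∃ F : G →+ ZMod (ℓ^M), (∀ u ∈ U, F u = 0) ∧
      ∀ x, ZMod.castHom (pow_dvd_pow ℓ hmM) (ZMod (ℓ^m)) (F x) = f x := by
  classical
  have hl : ℓ ≠ 0 := (Fact.out : ℓ.Prime).ne_zero
  set ψ := psi ℓ m M hmM with hψ
  have hm0 : ((ℓ:ZMod (ℓ^m)))^m * 1 = 0 := by
    have h0 : ((ℓ^m : ℕ) : ZMod (ℓ^m)) = 0 := ZMod.natCast_self _
    push_cast at h0
    rw [mul_one, h0]
  set φ : G →+ G × ZMod (ℓ^M) := AddMonoidHom.mk'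
      (fun x => ((ℓ^(M-m)) • x, ψ (f x)))
      (by intro x y; simp [smul_add, map_add, Prod.ext_iff]) with hφ
  set χ : G →+ G × ZMod (ℓ^M) := AddMonoidHom.mk'
      (fun x => ((ℓ^M) • x, (0 : ZMod (ℓ^M))))
      (by intro x y; simp [smul_add, Prod.ext_iff]) with hχ
  have hφ_app : ∀ x, φ x = ((ℓ^(M-m)) • x, ψ (f x)) := fun x => rfl
  have hχ_app : ∀ x, χ x = ((ℓ^M) • x, (0 : ZMod (ℓ^M))) := fun x => rfl
  set Γ₀ : AddSubgroup (G × ZMod (ℓ^M)) := φ.range ⊔ U.prod ⊥ ⊔ χ.range with hΓ₀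
  have hsub1 : φ.range ≤ Γ₀ := le_trans (le_sup_left (b := U.prod ⊥)) (le_sup_left (b := χ.range))
  have hsub2 : U.prod ⊥ ≤ Γ₀ := le_trans (le_sup_right (a := φ.range)) (le_sup_left (b := χ.range))
  have hsub3 : χ.range ≤ Γ₀ := le_sup_right (a := φ.range ⊔ U.prod ⊥)
  have hmemφ : ∀ x, ((ℓ^(M-m)) • x, ψ (f x)) ∈ Γ₀ := by
    intro x
    exact hsub1 ⟨x, rfl⟩
  have hmemU : ∀ u ∈ U, ((u : G), (0:ZMod (ℓ^M))) ∈ Γ₀ := by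
    intro u hu
    exact hsub2 (AddSubgroup.mem_prod.mpr ⟨hu, rfl⟩)
  have hmemχ : ∀ x, ((ℓ^M) • x, (0:ZMod (ℓ^M))) ∈ Γ₀ := by
    intro x
    exact hsub3 ⟨x, rfl⟩
  -- functionality of Γ₀
  have hfun0 : ∀ r : ZMod (ℓ^M), ((0:G), r) ∈ Γ₀ → r = 0 := by
    intro r hr
    rw [hΓ₀, AddSubgroup.mem_sup] at hr
    obtain ⟨p, hp, q, hq, hpq⟩ := hr
    rw [AddSubgroup.mem_sup] at hp
    obtain ⟨p1, hp1, p2, hp2, hp12⟩ := hp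
    obtain ⟨x, hx⟩ := hp1
    obtain ⟨z, hz⟩ := hq
    rw [← hx, hφ_app] at hp12
    rw [← hz, hχ_app] at hpq
    rw [AddSubgroup.mem_prod] at hp2
    rw [← hp12] at hpq
    have hfst : (ℓ^(M-m)) • x + p2.1 + (ℓ^M) • z = 0 := congrArg Prod.fst hpq
    have hsnd : ψ (f x) + p2.2 + 0 = r := congrArg Prod.snd hpq
    have hu : (ℓ^(M-m)) • (x + (ℓ^m) • z) ∈ U := by
      have heq : (ℓ^(M-m)) • (x + (ℓ^m) • z) = -p2.1 := by
        rw [smul_add, smul_smul, ← pow_add, Nat.sub_add_cancel hmM]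
        linear_combination (norm := abel) hfst
      rw [heq]
      exact neg_mem hp2.1
    have hxU : x + (ℓ^m) • z ∈ U := hsat _ _ hu
    have hfx : f x = 0 := by
      have h1 : f (x + (ℓ^m) • z) = 0 := hf _ hxU
      have h2 : f ((ℓ^m) • z) = ((ℓ:ZMod (ℓ^m)))^m * f z := by
        rw [map_nsmul, nsmul_eq_mul]; push_cast; ring
      have h3 : ((ℓ:ZMod (ℓ^m)))^m * f z = 0 := by
        calc ((ℓ:ZMod (ℓ^m)))^m * f z = (((ℓ:ZMod (ℓ^m)))^m * 1) * f z := by ring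
        _ = 0 := by rw [hm0, zero_mul]
      rw [map_add, h2, h3, add_zero] at h1
      exact h1
    rw [hfx, map_zero, hp2.2] at hsnd
    simpa using hsnd.symm
  -- the poset
  set S : Set (AddSubgroup (G × ZMod (ℓ^M))) :=
    {Γ | Γ₀ ≤ Γ ∧ ∀ r : ZMod (ℓ^M), ((0:G), r) ∈ Γ → r = 0} with hS
  have hΓ₀S : Γ₀ ∈ S := ⟨le_rfl, hfun0⟩
  obtain ⟨Γm, hΓmS, hΓmax⟩ : ∃ Γm, Γm ∈ S ∧ ∀ Γ' ∈ S, Γm ≤ Γ' → Γ' ≤ Γm := by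
    have hchains : ∀ c ⊆ S, IsChain (fun x1 x2 => x1 ≤ x2) c → ∀ y ∈ c,
        ∃ ub ∈ S, ∀ z ∈ c, z ≤ ub := by
      intro c hcS hchain y hy
      refine ⟨sSup c, ⟨le_trans (hcS hy).1 (le_sSup hy), ?_⟩, fun z hz => le_sSup hz⟩
      intro r hr
      rw [AddSubgroup.mem_sSup_of_directedOn ⟨y, hy⟩ hchain.directedOn] at hr
      obtain ⟨Γ, hΓc, hrΓ⟩ := hr
      exact (hcS hΓc).2 r hrΓ
    obtain ⟨Γm, h1, h2⟩ := zorn_le_nonempty₀ S hchains Γ₀ hΓ₀S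
    exact ⟨Γm, h2.1, fun Γ' h' hle => h2.2 h' hle⟩
  -- totality of the maximal graph
  have htot : ∀ x : G, ∃ r, (x, r) ∈ Γm := by
    by_contra hcon
    push_neg at hcon
    obtain ⟨x₀, hx₀⟩ := hcon
    set I : AddSubgroup ℤ :=
      { carrier := {k | ∃ r, (k • x₀, r) ∈ Γm}
        zero_mem' := ⟨0, by rw [zero_smul]; exact zero_mem Γm⟩
        add_mem' := by
          rintro a b ⟨r, hr⟩ ⟨s, hs⟩
          exact ⟨r + s, by rw [add_smul]; exact add_mem hr hs⟩
        neg_mem' := by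
          rintro a ⟨r, hr⟩
          exact ⟨-r, by rw [neg_smul]; simpa using neg_mem hr⟩ } with hI
    have hIiff : ∀ k : ℤ, k ∈ I ↔ ∃ r, (k • x₀, r) ∈ Γm := fun k => Iff.rfl
    have hχx0 : (((ℓ:ℤ)^M) • x₀, (0:ZMod (ℓ^M))) ∈ Γm := by
      have h1 : ((ℓ^M : ℕ) • x₀, (0:ZMod (ℓ^M))) ∈ Γm := hΓmS.1 (hmemχ x₀)
      have h2 : ((ℓ:ℤ)^M) • x₀ = (ℓ^M : ℕ) • x₀ := by
        rw [← natCast_zsmul]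
        congr 1
      rw [h2]
      exact h1
    have hM_mem : ((ℓ:ℤ)^M) ∈ I := ⟨0, hχx0⟩
    obtain ⟨a, haI⟩ := Int.subgroup_cyclic I
    have hamem : ∀ k : ℤ, k ∈ I ↔ a ∣ k := by
      intro k
      rw [haI, ← AddSubgroup.zmultiples_eq_closure]
      exact Int.mem_zmultiples_iff
    obtain ⟨e, heM, hae⟩ : ∃ e ≤ M, a.natAbs = ℓ^e := by
      have h1 : a.natAbs ∣ ℓ^M := by
        have h2 := (hamem _).mp hM_mem
        rw [← Int.natAbs_dvd] at h2
        have := Int.ofNat_dvd.mp (by exact_mod_cast h2 : (a.natAbs : ℤ) ∣ ((ℓ^M : ℕ) : ℤ))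
        exact this
      exact (Nat.dvd_prime_pow (Fact.out : ℓ.Prime)).mp h1
    have hmem_iff : ∀ k : ℤ, k ∈ I ↔ ((ℓ:ℤ)^e ∣ k) := by
      intro k
      rw [hamem, ← Int.natAbs_dvd, hae]
      push_cast
      rfl
    have he_mem : ((ℓ:ℤ)^e) ∈ I := (hmem_iff _).mpr dvd_rfl
    obtain ⟨β, hβ⟩ := he_mem
    have hβ0 : (ℓ:ZMod (ℓ^M))^(M-e) * β = 0 := by
      have h1 : (((ℓ:ℤ)^(M-e)) • ((((ℓ:ℤ)^e) • x₀, β) : G × ZMod (ℓ^M))) ∈ Γm :=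
        zsmul_mem hβ _
      have hcalc : (((ℓ:ℤ)^(M-e)) • ((((ℓ:ℤ)^e) • x₀, β) : G × ZMod (ℓ^M)))
          - (((ℓ:ℤ)^M) • x₀, (0:ZMod (ℓ^M))) = ((0:G), ((ℓ:ℤ)^(M-e)) • β) := by
        refine Prod.ext ?_ ?_
        · show ((ℓ:ℤ)^(M-e)) • (((ℓ:ℤ)^e) • x₀) - ((ℓ:ℤ)^M) • x₀ = 0
          rw [smul_smul, ← pow_add]
          rw [show (M - e) + e = M by omega]
          abel
        · show ((ℓ:ℤ)^(M-e)) • β - 0 = ((ℓ:ℤ)^(M-e)) • β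
          rw [sub_zero]
      have h3 : ((0:G), ((ℓ:ℤ)^(M-e)) • β) ∈ Γm := by
        rw [← hcalc]
        exact sub_mem h1 hχx0
      have h4 := hΓmS.2 _ h3
      rw [zsmul_eq_mul] at h4
      push_cast at h4
      exact h4
    obtain ⟨cv, hcv⟩ := zmod_div_pow (ℓ := ℓ) heM β hβ0
    have hecv : ((ℓ:ℤ)^e) • cv = β := by
      rw [zsmul_eq_mul]
      push_cast
      exact hcv
    set Γ' := Γm ⊔ AddSubgroup.zmultiples ((x₀, cv) : G × ZMod (ℓ^M)) with hΓ'
    have hΓ'S : Γ' ∈ S := by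
      constructor
      · exact le_trans hΓmS.1 le_sup_left
      · intro r hr
        rw [hΓ', AddSubgroup.mem_sup] at hr
        obtain ⟨γ, hγ, δ, hδ, hγδ⟩ := hr
        rw [AddSubgroup.mem_zmultiples_iff] at hδ
        obtain ⟨k, hk⟩ := hδ
        rw [← hk] at hγδ
        have hγ1 : γ.1 = (-k) • x₀ := by
          have h1 : γ.1 + k • x₀ = 0 := congrArg Prod.fst hγδ
          rw [neg_smul]
          linear_combination (norm := abel) h1
        have hγ2r : γ.2 + k • cv = r := congrArg Prod.snd hγδ
        have hkI : -k ∈ I := ⟨γ.2, by rw [← hγ1]; simpa using hγ⟩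
        obtain ⟨j, hj⟩ := (hmem_iff _).mp hkI
        have hη : ((j • (((ℓ:ℤ)^e) • x₀, β) : G × ZMod (ℓ^M))) ∈ Γm := zsmul_mem hβ j
        have hγ2 : γ.2 = j • β := by
          have hsub : (γ - j • ((((ℓ:ℤ)^e) • x₀, β) : G × ZMod (ℓ^M))) ∈ Γm := sub_mem hγ hη
          have hfst : γ.1 - j • (((ℓ:ℤ)^e) • x₀) = 0 := by
            rw [hγ1, smul_smul, mul_comm j, ← hj]
            abel
          have heq : (γ - j • ((((ℓ:ℤ)^e) • x₀, β) : G × ZMod (ℓ^M)))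
              = ((0:G), γ.2 - j • β) := by
            refine Prod.ext ?_ rfl
            exact hfst
          rw [heq] at hsub
          have := hΓmS.2 _ hsub
          linear_combination this
        rw [← hγ2r, hγ2]
        have hkval : k = -((ℓ:ℤ)^e * j) := by omega
        rw [hkval, neg_smul, mul_comm, ← smul_smul, hecv]
        abel
    have hmem : ((x₀, cv) : G × ZMod (ℓ^M)) ∈ Γm :=
      hΓmax Γ' hΓ'S (le_sup_left (b := AddSubgroup.zmultiples ((x₀, cv) : G × ZMod (ℓ^M))))
        ((le_sup_right (a := Γm)) (AddSubgroup.mem_zmultiples _))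
    exact hx₀ cv hmem
  -- define F
  choose Fv hFv using htot
  have hzero : ∀ p : G × ZMod (ℓ^M), p ∈ Γm → p.1 = 0 → p.2 = 0 := by
    intro p hp h1
    exact hΓmS.2 p.2 (by rw [show ((0:G), p.2) = p from Prod.ext h1.symm rfl]; exact hp)
  have hFadd : ∀ x y, Fv (x + y) = Fv x + Fv y := by
    intro x y
    have h1 := sub_mem (sub_mem (hFv (x+y)) (hFv x)) (hFv y)
    have h2 := hzero _ h1 (by simp)
    have h3 : Fv (x+y) - Fv x - Fv y = 0 := h2
    linear_combination h3
  have hFu : ∀ u ∈ U, Fv u = 0 := by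
    intro u hu
    have h1 := sub_mem (hFv u) (hΓmS.1 (hmemU u hu))
    have h2 := hzero _ h1 (by simp)
    have h3 : Fv u - 0 = 0 := h2
    linear_combination h3
  have hFsmul : ∀ (n : ℕ) (y : G), Fv (n • y) = n • Fv y := by
    have hF0 : Fv 0 = 0 := by
      have h1 := sub_mem (hFv 0) (zero_mem Γm)
      have h2 := hzero _ h1 (by simp)
      simpa using h2
    intro n
    induction n with
    | zero => intro y; simpa using hF0
    | succ n ih => intro y; rw [succ_nsmul, succ_nsmul, hFadd, ih]
  refine ⟨AddMonoidHom.mk' Fv hFadd, hFu, ?_⟩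
  intro x
  have hx : (((ℓ^(M-m)) • x, ψ (f x)) : G × ZMod (ℓ^M)) ∈ Γm := hΓmS.1 (hmemφ x)
  have h1 : Fv ((ℓ^(M-m)) • x) = ψ (f x) := by
    have ha := sub_mem (hFv ((ℓ^(M-m)) • x)) hx
    have hb := hzero _ ha (by simp)
    have h3 : Fv ((ℓ^(M-m)) • x) - ψ (f x) = 0 := hb
    linear_combination h3
  have h3 : (ℓ^(M-m)) • Fv x = ψ (f x) := by rw [← h1, hFsmul]
  apply psi_injective hmM
  rw [psi_cast hmM]
  show (Fv x) * (ℓ:ZMod (ℓ^M))^(M-m) = ψ (f x)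
  rw [← h3, nsmul_eq_mul]
  push_cast
  ring


open Polynomial in
noncomputable def seqLim (ℓ : ℕ) [Fact ℓ.Prime] (a : ∀ k : ℕ, ZMod (ℓ^k))
    (hcompat : ∀ (k1 k2 : ℕ) (h : k1 ≤ k2),
      ZMod.castHom (pow_dvd_pow ℓ h) (ZMod (ℓ^k1)) (a k2) = a k1) : ℤ_[ℓ] :=
  PadicInt.lift (f := fun k => Polynomial.eval₂RingHom (Int.castRingHom (ZMod (ℓ^k))) (a k))
    (by
      intro k1 k2 hk
      apply Polynomial.ringHom_ext
      · intro c; simp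
      · simpa using hcompat k1 k2 hk)
    Polynomial.X

lemma seqLim_spec (ℓ : ℕ) [Fact ℓ.Prime] (a : ∀ k : ℕ, ZMod (ℓ^k))
    (hcompat : ∀ (k1 k2 : ℕ) (h : k1 ≤ k2),
      ZMod.castHom (pow_dvd_pow ℓ h) (ZMod (ℓ^k1)) (a k2) = a k1) (k : ℕ) :
    PadicInt.toZModPow k (seqLim ℓ a hcompat) = a k := by
  have h := PadicInt.lift_spec (p := ℓ)
    (f := fun k => Polynomial.eval₂RingHom (Int.castRingHom (ZMod (ℓ^k))) (a k))
    (by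
      intro k1 k2 hk
      apply Polynomial.ringHom_ext
      · intro c; simp
      · simpa using hcompat k1 k2 hk) k
  have h2 := congrArg (fun φ => φ (Polynomial.X : Polynomial ℤ)) h
  simpa [seqLim] using h2

theorem lift_mod_exists_padic (ℓ : ℕ) [Fact ℓ.Prime] {G : Type*} [AddCommGroup G]
    (m : ℕ) (U : AddSubgroup G) (hsat : ∀ (x : G) (k : ℕ), (ℓ^k) • x ∈ U → x ∈ U)
    (f : G →+ ZMod (ℓ^m)) (hf : ∀ u ∈ U, f u = 0) :
    ∃ F : G →+ PadicInt ℓ, (∀ u ∈ U, F u = 0) ∧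
      ∀ x, PadicInt.toZModPow m (F x) = f x := by
  classical
  -- one-step lifting
  have step : ∀ (k : ℕ) (g : G →+ ZMod (ℓ^k)), (∀ u ∈ U, g u = 0) →
      ∃ g' : G →+ ZMod (ℓ^(k+1)), (∀ u ∈ U, g' u = 0) ∧
        ∀ x, ZMod.castHom (pow_dvd_pow ℓ (Nat.le_succ k)) (ZMod (ℓ^k)) (g' x) = g x :=
    fun k g hg => lift_mod_exists ℓ k (k+1) (Nat.le_succ k) U hsat g hg
  choose stepF stepU stepC using step
  -- the tower
  let T : ∀ k : ℕ, {g : G →+ ZMod (ℓ^(m+k)) // ∀ u ∈ U, g u = 0} :=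
    fun k => Nat.rec (⟨f, hf⟩ : {g : G →+ ZMod (ℓ^(m+0)) // ∀ u ∈ U, g u = 0})
      (fun k p => ⟨stepF (m+k) p.1 p.2, stepU (m+k) p.1 p.2⟩) k
  have hT0 : (T 0).1 = f := rfl
  have hTsucc : ∀ k, (T (k+1)).1 = stepF (m+k) (T k).1 (T k).2 := fun k => rfl
  have hTstep : ∀ k x, ZMod.castHom (pow_dvd_pow ℓ (Nat.le_succ (m+k))) (ZMod (ℓ^(m+k)))
      ((T (k+1)).1 x) = (T k).1 x := by
    intro k x
    rw [hTsucc k]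
    exact stepC (m+k) (T k).1 (T k).2 x
  -- general compatibility within the tower
  have hself : ∀ (n : ℕ) (y : ZMod (ℓ^n)), ZMod.castHom (dvd_refl (ℓ^n)) (ZMod (ℓ^n)) y = y := by
    intro n y
    rw [ZMod.castHom_apply, ZMod.cast_id]
  have hTcompat : ∀ (k2 k1 : ℕ) (h : k1 ≤ k2) (x : G),
      ZMod.castHom (pow_dvd_pow ℓ (by omega : m+k1 ≤ m+k2)) (ZMod (ℓ^(m+k1))) ((T k2).1 x)
        = (T k1).1 x := by
    intro k2
    induction k2 with
    | zero =>
      intro k1 h x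
      obtain rfl : k1 = 0 := by omega
      exact hself _ _
    | succ n ih =>
      intro k1 h x
      rcases Nat.lt_or_ge k1 (n+1) with hlt | hge
      · have hle : k1 ≤ n := by omega
        calc ZMod.castHom _ (ZMod (ℓ^(m+k1))) ((T (n+1)).1 x)
            = ZMod.castHom (pow_dvd_pow ℓ (by omega : m+k1 ≤ m+n)) (ZMod (ℓ^(m+k1)))
              (ZMod.castHom (pow_dvd_pow ℓ (Nat.le_succ (m+n))) (ZMod (ℓ^(m+n)))
                ((T (n+1)).1 x)) := by
              rw [← RingHom.comp_apply, ZMod.castHom_comp]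
          _ = _ := by rw [hTstep n x]; exact ih k1 hle x
        
      · obtain rfl : k1 = n+1 := by omega
        exact hself _ _
  -- the compatible full sequence
  have hjm : ∀ j : ℕ, (ℓ:ℕ)^j ∣ ℓ^(m+j) := fun j => pow_dvd_pow ℓ (by omega)
  set b : G → ∀ j : ℕ, ZMod (ℓ^j) :=
    fun x j => ZMod.castHom (hjm j) (ZMod (ℓ^j)) ((T j).1 x) with hb
  have hbcompat : ∀ (x : G) (k1 k2 : ℕ) (h : k1 ≤ k2),
      ZMod.castHom (pow_dvd_pow ℓ h) (ZMod (ℓ^k1)) (b x k2) = b x k1 := by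
    intro x k1 k2 h
    rw [hb]
    simp only
    rw [← RingHom.comp_apply, ZMod.castHom_comp]
    have h1 : ZMod.castHom (pow_dvd_pow ℓ (by omega : m+k1 ≤ m+k2)) (ZMod (ℓ^(m+k1)))
        ((T k2).1 x) = (T k1).1 x := hTcompat k2 k1 h x
    calc ZMod.castHom _ (ZMod (ℓ^k1)) ((T k2).1 x)
        = ZMod.castHom (hjm k1) (ZMod (ℓ^k1))
          (ZMod.castHom (pow_dvd_pow ℓ (by omega : m+k1 ≤ m+k2)) (ZMod (ℓ^(m+k1)))
            ((T k2).1 x)) := by rw [← RingHom.comp_apply, ZMod.castHom_comp]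
      _ = _ := by rw [h1]
  -- the limit hom
  have hFadd : ∀ x y : G,
      seqLim ℓ (b (x+y)) (hbcompat (x+y)) = seqLim ℓ (b x) (hbcompat x) + seqLim ℓ (b y) (hbcompat y) := by
    intro x y
    rw [← PadicInt.ext_of_toZModPow]
    intro n
    rw [map_add]
    rw [seqLim_spec, seqLim_spec, seqLim_spec]
    rw [hb]
    simp only
    rw [map_add, map_add]
  refine ⟨AddMonoidHom.mk' (fun x => seqLim ℓ (b x) (hbcompat x)) hFadd, ?_, ?_⟩
  · intro u hu
    show seqLim ℓ (b u) (hbcompat u) = 0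
    rw [← PadicInt.ext_of_toZModPow]
    intro n
    rw [seqLim_spec, map_zero, hb]
    simp only
    have hTu : (T n).1 u = 0 := (T n).2 u hu
    rw [hTu, map_zero]
  · intro x
    show PadicInt.toZModPow m (seqLim ℓ (b x) (hbcompat x)) = f x
    rw [seqLim_spec, hb]
    simp only
    have h1 : ZMod.castHom (pow_dvd_pow ℓ (by omega : m+m ≥ m+0)) (ZMod (ℓ^(m+0)))
        ((T m).1 x) = (T 0).1 x := hTcompat m 0 (by omega) x
    have h2 : ZMod.castHom (hjm m) (ZMod (ℓ^m)) ((T m).1 x)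
        = ZMod.castHom (pow_dvd_pow ℓ (by omega : m+0 ≤ m+m)) (ZMod (ℓ^(m+0))) ((T m).1 x) := rfl
    rw [h2, h1, hT0]


section CPValuation
open scoped Classical
variable {ℓ : ℕ} [Fact ℓ.Prime] {K : Type*} [Field K]

/-- The unit group of a valuation subring, as an `AddSubgroup` of `Additive Kˣ`. -/
def unitSub (A : ValuationSubring K) : AddSubgroup (Additive Kˣ) where
  carrier := {x | A.valuation ((Additive.toMul x : Kˣ) : K) = 1}
  zero_mem' := by
    show A.valuation (((1:Kˣ) : K)) = 1
    simp
  add_mem' := by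
    intro x y hx hy
    show A.valuation (((Additive.toMul x * Additive.toMul y : Kˣ)) : K) = 1
    rw [Units.val_mul, map_mul]
    rw [Set.mem_setOf_eq] at hx hy
    rw [hx, hy, one_mul]
  neg_mem' := by
    intro x hx
    show A.valuation ((((Additive.toMul x)⁻¹ : Kˣ)) : K) = 1
    rw [Set.mem_setOf_eq] at hx
    rw [Units.val_inv_eq_inv_val, map_inv₀, hx, inv_one]

lemma mem_unitSub_iff {A : ValuationSubring K} (x : Kˣ) :
    Additive.ofMul x ∈ unitSub A ↔ A.valuation (x : K) = 1 := Iff.rfl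

lemma mem_inertia_iff {m : ℕ∞} {A : ValuationSubring K} (σ : gal ℓ m K) :
    σ ∈ inertia ℓ m A ↔ ∀ y ∈ unitSub A, σ y = 0 := by
  constructor
  · intro h y hy
    exact h (Additive.toMul y) hy
  · intro h x hx
    exact h (Additive.ofMul x) hx

lemma val_ne_zero (A : ValuationSubring K) (x : Kˣ) : A.valuation (x : K) ≠ 0 := by
  rw [Valuation.ne_zero_iff]; exact x.ne_zero

lemma pow_eq_one_val {Γ : Type*} [LinearOrderedCommGroupWithZero Γ] (a : Γ) (n : ℕ)
    (hn : n ≠ 0) (h : a ^ n = 1) : a = 1 := by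
  rcases lt_trichotomy a 1 with hlt | heq | hgt
  · exfalso
    have := pow_lt_one₀ (zero_le') hlt hn
    rw [h] at this; exact lt_irrefl _ this
  · exact heq
  · exfalso
    have := one_lt_pow₀ hgt hn
    rw [h] at this; exact lt_irrefl _ this

lemma satSub (A : ValuationSubring K) :
    ∀ (x : Additive Kˣ) (k : ℕ), (ℓ^k) • x ∈ unitSub A → x ∈ unitSub A := by
  intro x k hx
  have hl : ℓ ≠ 0 := (Fact.out : ℓ.Prime).ne_zero
  have h1 : A.valuation (((Additive.toMul x : Kˣ) : K))^(ℓ^k) = 1 := by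
    have h2 : A.valuation (((Additive.toMul ((ℓ^k) • x) : Kˣ) : K)) = 1 := hx
    rw [toMul_nsmul] at h2
    rw [← h2, Units.val_pow_eq_pow_val, map_pow]
  exact pow_eq_one_val _ _ (pow_ne_zero _ hl) h1

lemma val_unit_iff (A : ValuationSubring K) (x : Kˣ) :
    A.valuation (x : K) = 1 ↔ ((x : K) ∈ A ∧ ((x : K))⁻¹ ∈ A) := by
  constructor
  · intro h
    refine ⟨(A.valuation_le_one_iff _).mp h.le, (A.valuation_le_one_iff _).mp ?_⟩
    rw [map_inv₀, h, inv_one]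
  · rintro ⟨h1, h2⟩
    have hv1 : A.valuation (x : K) ≤ 1 := (A.valuation_le_one_iff _).mpr h1
    have hv2 : A.valuation ((x : K))⁻¹ ≤ 1 := (A.valuation_le_one_iff _).mpr h2
    rw [map_inv₀] at hv2
    have hne : A.valuation (x : K) ≠ 0 := val_ne_zero A x
    rcases lt_trichotomy (A.valuation (x:K)) 1 with hlt | heq | hgt
    · exfalso
      have : (1:(A.ValueGroup)) < (A.valuation (x:K))⁻¹ := by
        rw [lt_inv_comm₀ (zero_lt_one) (zero_lt_iff.mpr hne), inv_one]
        exact hlt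
      exact absurd hv2 (not_le.mpr this)
    · exact heq
    · exact absurd hv1 (not_le.mpr hgt)

lemma inertia_anti {m : ℕ∞} {A B : ValuationSubring K} (hAB : A ≤ B) :
    inertia ℓ m B ⊆ inertia ℓ m A := by
  intro σ hσ x hx
  apply hσ x
  rw [val_unit_iff] at hx ⊢
  exact ⟨hAB hx.1, hAB hx.2⟩

lemma galApp_unit {m : ℕ∞} (σ : gal ℓ m K) (x : Kˣ) :
    galApp σ ((x : Kˣ) : K) = galu σ x := by
  have hne : ((x : Kˣ) : K) ≠ 0 := x.ne_zero
  have : galApp σ ((x : Kˣ) : K) = galu σ (Units.mk0 _ hne) := dif_pos hne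
  rw [this]
  congr 1
  ext; simp

lemma galu_mul {m : ℕ∞} (σ : gal ℓ m K) (x y : Kˣ) :
    galu σ (x * y) = galu σ x + galu σ y := by
  show σ (Additive.ofMul (x * y)) = _
  rw [ofMul_mul, map_add]
  rfl

lemma galu_inv {m : ℕ∞} (σ : gal ℓ m K) (x : Kˣ) :
    galu σ x⁻¹ = - galu σ x := by
  show σ (Additive.ofMul x⁻¹) = _
  rw [ofMul_inv, map_neg]
  rfl

lemma galu_pow {m : ℕ∞} (σ : gal ℓ m K) (x : Kˣ) (n : ℕ) :
    galu σ (x ^ n) = n • galu σ x := by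
  show σ (Additive.ofMul (x ^ n)) = _
  rw [ofMul_pow, map_nsmul]
  rfl

lemma val_one_sub_of_lt {A : ValuationSubring K} {x : K} (h : A.valuation x < 1) :
    A.valuation (1 - x) = 1 := by
  have h2 : A.valuation (-x) < A.valuation 1 := by
    rw [Valuation.map_neg, map_one]; exact h
  calc A.valuation (1 - x) = A.valuation (1 + -x) := by rw [sub_eq_add_neg]
    _ = A.valuation 1 := Valuation.map_add_eq_of_lt_left _ h2
    _ = 1 := map_one _

lemma val_one_sub_of_gt {A : ValuationSubring K} {x : K} (h : 1 < A.valuation x) :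
    A.valuation (1 - x) = A.valuation x := by
  have h2 : A.valuation 1 < A.valuation (-x) := by
    rw [Valuation.map_neg, map_one]; exact h
  calc A.valuation (1 - x) = A.valuation (1 + -x) := by rw [sub_eq_add_neg]
    _ = A.valuation (-x) := Valuation.map_add_eq_of_lt_right _ h2
    _ = A.valuation x := Valuation.map_neg _ _

lemma galu_neg_one {m : ℕ∞} {A : ValuationSubring K} {σ : gal ℓ m K}
    (hσ : σ ∈ inertia ℓ m A) : galu σ (-1 : Kˣ) = 0 := by
  apply hσ
  show A.valuation (((-1:Kˣ) : K)) = 1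
  rw [Units.val_neg, Units.val_one, Valuation.map_neg, map_one]

/-- Two elements of a common inertia group form a C-pair. -/
theorem isCPair_of_inertia {m : ℕ∞} {A : ValuationSubring K} {σ τ : gal ℓ m K}
    (hσ : σ ∈ inertia ℓ m A) (hτ : τ ∈ inertia ℓ m A) : IsCPair σ τ := by
  intro x hx0 hx1
  have h1x : (1:K) - x ≠ 0 := sub_ne_zero.mpr (Ne.symm hx1)
  set xu : Kˣ := Units.mk0 x hx0 with hxu
  set yu : Kˣ := Units.mk0 (1-x) h1x with hyu
  have hgx : ∀ ρ : gal ℓ m K, galApp ρ x = galu ρ xu := fun ρ => dif_pos hx0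
  have hgy : ∀ ρ : gal ℓ m K, galApp ρ (1-x) = galu ρ yu := fun ρ => dif_pos h1x
  rw [hgx σ, hgx τ, hgy σ, hgy τ]
  rcases lt_trichotomy (A.valuation x) 1 with hlt | heq | hgt
  · have hy1 : A.valuation ((yu:K)) = 1 := val_one_sub_of_lt hlt
    rw [hσ yu hy1, hτ yu hy1, mul_zero, zero_mul]
  · have hx1' : A.valuation ((xu:K)) = 1 := heq
    rw [hσ xu hx1', hτ xu hx1', zero_mul, mul_zero]
  · -- v x > 1
    have hxinv : x⁻¹ ≠ 1 := by
      intro h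
      apply hx1
      rw [← inv_inv x, h, inv_one]
    have hzne : (1:K) - x⁻¹ ≠ 0 := sub_ne_zero.mpr (Ne.symm hxinv)
    set zu : Kˣ := Units.mk0 (1 - x⁻¹) hzne with hzu
    have hvxne : A.valuation x ≠ 0 := by rw [Valuation.ne_zero_iff]; exact hx0
    have hvz : A.valuation (1 - x⁻¹) = 1 := by
      apply val_one_sub_of_lt
      rw [map_inv₀]
      exact inv_lt_one_of_one_lt₀ hgt  -- may need fix
    have hyfact : yu = (-xu) * zu := by
      ext
      show (1 - x) = (-x) * (1 - x⁻¹)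
      linear_combination (-1 : K) * mul_inv_cancel₀ hx0
    have hneg : (-xu) = (-1 : Kˣ) * xu := by ext; simp
    have key : ∀ ρ : gal ℓ m K, ρ ∈ inertia ℓ m A → galu ρ yu = galu ρ xu := by
      intro ρ hρ
      rw [hyfact, galu_mul, hneg, galu_mul, galu_neg_one hρ, zero_add]
      rw [hρ zu hvz, add_zero]
    rw [key σ hσ, key τ hτ]

end CPValuation

section CPLift
open scoped Classical
variable {ℓ : ℕ} [Fact ℓ.Prime] {K : Type*} [Field K]

lemma galProj_top_top (σ : gal ℓ ⊤ K) : galProj ⊤ ⊤ σ = σ := by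
  show (LamProj ℓ ⊤ ⊤).comp σ = σ
  show (AddMonoidHom.id _).comp σ = σ
  exact AddMonoidHom.id_comp σ

lemma Mfun_one_top_le {M : ℕ∞} (hM : Mfun 1 ⊤ ≤ M) : M = ⊤ := by
  have : (⊤ : ℕ∞) ≤ M := hM
  exact top_le_iff.mp this

lemma Mfun_one_coe_le {m : ℕ} {M : ℕ∞} (hM : Mfun 1 (m : ℕ∞) ≤ M) :
    ((2 * m - 1 : ℕ) : ℕ∞) ≤ M := by
  have : Mfun 1 (m : ℕ∞) = ((2 * m - 1 : ℕ) : ℕ∞) := by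
    show (((1 + 1) * m - 1 : ℕ) : ℕ∞) = _
    norm_num
  rwa [this] at hM

/-- Lifting within the inertia group. -/
theorem inertia_lift {m M : ℕ∞} (hm : 1 ≤ m) (hM : Mfun 1 m ≤ M)
    (A : ValuationSubring K) (σ : gal ℓ m K) (hσ : σ ∈ inertia ℓ m A) :
    ∃ σ' : gal ℓ M K, σ' ∈ inertia ℓ M A ∧ galProj M m σ' = σ := by
  induction m using ENat.recTopCoe with
  | top =>
    obtain rfl : M = ⊤ := Mfun_one_top_le hM
    exact ⟨σ, hσ, galProj_top_top σ⟩
  | coe mn =>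
    have hmn : 1 ≤ mn := by simpa using hm
    induction M using ENat.recTopCoe with
    | top =>
      -- lift to ℤ_ℓ
      obtain ⟨F, hFU, hFc⟩ := lift_mod_exists_padic ℓ (G := Additive Kˣ) mn (unitSub A)
        (satSub A) σ ((mem_inertia_iff σ).mp hσ)
      refine ⟨F, ?_, ?_⟩
      · refine (mem_inertia_iff (show gal ℓ ⊤ K from F)).mpr ?_
        exact hFU
      · show (LamProj ℓ ⊤ (mn : ℕ∞)).comp F = σ
        show (PadicInt.toZModPow mn).toAddMonoidHom.comp F = σ
        ext x
        exact hFc x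
    | coe Mn =>
      have hMn : 2 * mn - 1 ≤ Mn := by
        have h1 := Mfun_one_coe_le hM
        have h2 : ((2 * mn - 1 : ℕ) : ℕ∞) ≤ ((Mn : ℕ) : ℕ∞) := h1
        exact WithTop.coe_le_coe.mp h2
      have hmM : mn ≤ Mn := by omega
      have hdvd : (ℓ:ℕ)^mn ∣ ℓ^Mn := pow_dvd_pow ℓ hmM
      obtain ⟨F, hFU, hFc⟩ := lift_mod_exists ℓ (G := Additive Kˣ) mn Mn hmM (unitSub A)
        (satSub A) σ ((mem_inertia_iff σ).mp hσ)
      refine ⟨F, ?_, ?_⟩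
      · refine (mem_inertia_iff (show gal ℓ (Mn : ℕ∞) K from F)).mpr ?_
        exact hFU
      · show (LamProj ℓ (Mn : ℕ∞) (mn : ℕ∞)).comp F = σ
        have hred : LamProj ℓ (Mn : ℕ∞) (mn : ℕ∞)
            = (ZMod.castHom hdvd (ZMod (ℓ^mn))).toAddMonoidHom := by
          show (if h : (ℓ:ℕ)^mn ∣ ℓ^Mn then (ZMod.castHom h (ZMod (ℓ^mn))).toAddMonoidHom
            else 0) = _
          rw [dif_pos hdvd]
        rw [hred]
        ext x
        exact hFc x

/-- Forward direction: common inertia gives C-pair lifts. -/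
theorem forward_of_inertia {m M : ℕ∞} (hm : 1 ≤ m) (hM : Mfun 1 m ≤ M)
    (A : ValuationSubring K) (σ τ : gal ℓ m K)
    (hσ : σ ∈ inertia ℓ m A) (hτ : τ ∈ inertia ℓ m A) :
    ∃ σ' τ' : gal ℓ M K, galProj M m σ' = σ ∧ galProj M m τ' = τ ∧ IsCPair σ' τ' := by
  obtain ⟨σ', hσ', hσp⟩ := inertia_lift hm hM A σ hσ
  obtain ⟨τ', hτ', hτp⟩ := inertia_lift hm hM A τ hτ
  exact ⟨σ', τ', hσp, hτp, isCPair_of_inertia hσ' hτ'⟩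

end CPLift

section CPVsigma
open scoped Classical
variable {ℓ : ℕ} [Fact ℓ.Prime] {K : Type*} [Field K]

/-- The coarsening of `A` generated by an element of value `< 1`. -/
def hullRing (A : ValuationSubring K) (t : A.ValueGroup) (ht : 1 ≤ t) : ValuationSubring K where
  carrier := {x : K | ∃ n : ℕ, A.valuation x ≤ t^n}
  one_mem' := ⟨0, by simp⟩
  zero_mem' := ⟨0, by simp⟩
  add_mem' := by
    rintro a b ⟨n, hn⟩ ⟨n', hn'⟩
    refine ⟨max n n', le_trans (A.valuation.map_add a b) (max_le ?_ ?_)⟩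
    · exact le_trans hn (pow_le_pow_right₀ ht (le_max_left _ _))
    · exact le_trans hn' (pow_le_pow_right₀ ht (le_max_right _ _))
  mul_mem' := by
    rintro a b ⟨n, hn⟩ ⟨n', hn'⟩
    refine ⟨n + n', ?_⟩
    rw [map_mul, pow_add]
    exact mul_le_mul' hn hn'
  neg_mem' := by
    rintro a ⟨n, hn⟩
    exact ⟨n, by rwa [Valuation.map_neg]⟩
  mem_or_inv_mem' := by
    intro x
    by_cases hx : ∃ n : ℕ, A.valuation x ≤ t^n
    · exact Or.inl hx
    · push_neg at hx
      right
      refine ⟨0, ?_⟩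
      have h1 : (1:A.ValueGroup) < A.valuation x := by
        have := hx 0
        rw [pow_zero] at this
        exact lt_of_not_ge (by intro h; exact absurd h (not_le.mpr this))
      rw [map_inv₀, pow_zero]
      exact le_of_lt (inv_lt_one_of_one_lt₀ h1)

lemma mem_hullRing {A : ValuationSubring K} {t : A.ValueGroup} (ht : 1 ≤ t) (x : K) :
    x ∈ hullRing A t ht ↔ ∃ n : ℕ, A.valuation x ≤ t^n := Iff.rfl

lemma le_hullRing {A : ValuationSubring K} {t : A.ValueGroup} (ht : 1 ≤ t) :
    A ≤ hullRing A t ht := by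
  intro x hx
  exact ⟨0, by rw [pow_zero]; exact (A.valuation_le_one_iff x).mpr hx⟩

/-- Minimality: `σ` does not kill the units of any proper hull coarsening. -/
def MinProp {m : ℕ∞} (σ : gal ℓ m K) (V : ValuationSubring K) : Prop :=
  ∀ c₀ : Kˣ, V.valuation (c₀:K) < 1 →
    ∃ (d : Kˣ) (n : ℕ), galu σ d ≠ 0 ∧
      (V.valuation (c₀:K))^n ≤ V.valuation (d:K) ∧
      V.valuation (d:K) ≤ ((V.valuation (c₀:K))⁻¹)^n

lemma min_of_max {m : ℕ∞} {σ : gal ℓ m K} {V : ValuationSubring K}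
    (hσ : σ ∈ inertia ℓ m V)
    (hmax : ∀ W : ValuationSubring K, σ ∈ inertia ℓ m W → V ≤ W → W ≤ V) :
    MinProp σ V := by
  intro c₀ hc₀
  have hvne : V.valuation (c₀:K) ≠ 0 := val_ne_zero V c₀
  have hvpos : (0:V.ValueGroup) < V.valuation (c₀:K) := zero_lt_iff.mpr hvne
  set t : V.ValueGroup := (V.valuation (c₀:K))⁻¹ with hts
  have ht : 1 < t := (one_lt_inv₀ hvpos).mpr hc₀
  set W := hullRing V t ht.le with hW
  by_cases hcon : σ ∈ inertia ℓ m W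
  · exfalso
    have hle : W ≤ V := hmax W hcon (le_hullRing ht.le)
    have hmem : ((c₀⁻¹ : Kˣ) : K) ∈ W := by
      refine ⟨1, ?_⟩
      rw [pow_one, Units.val_inv_eq_inv_val, map_inv₀]
    have hmemV : ((c₀⁻¹ : Kˣ) : K) ∈ V := hle hmem
    have : V.valuation (((c₀⁻¹ : Kˣ)) : K) ≤ 1 := (V.valuation_le_one_iff _).mpr hmemV
    rw [Units.val_inv_eq_inv_val, map_inv₀] at this
    have h2 : (1:V.ValueGroup) < (V.valuation (c₀:K))⁻¹ := ht
    exact absurd this (not_le.mpr h2)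
  · -- there is a unit of W not killed by σ
    rw [inertia] at hcon
    simp only [Set.mem_setOf_eq, not_forall] at hcon
    obtain ⟨d, hdu, hdσ⟩ := hcon
    refine ⟨d, ?_⟩
    have hdW := (val_unit_iff W d).mp hdu
    obtain ⟨n1, hn1⟩ := hdW.1
    obtain ⟨n2, hn2⟩ := hdW.2
    refine ⟨max n1 n2, hdσ, ?_, ?_⟩
    · -- lower bound, from d⁻¹ ∈ W
      rw [map_inv₀] at hn2
      have h3 : (t^(max n1 n2))⁻¹ ≤ V.valuation (d:K) := by
        rw [← inv_inv (V.valuation (d:K))]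
        apply inv_anti₀
        · exact zero_lt_iff.mpr (inv_ne_zero (val_ne_zero V d))
        · exact le_trans hn2 (pow_le_pow_right₀ ht.le (le_max_right _ _))
      calc (V.valuation (c₀:K))^(max n1 n2) = (t^(max n1 n2))⁻¹ := by
            rw [hts, inv_pow, inv_inv]
        _ ≤ V.valuation (d:K) := h3
    · exact le_trans hn1 (pow_le_pow_right₀ ht.le (le_max_left _ _))

/-- σ(c) = 0 whenever c has positive value at one inertia valuation of σ and
negative value at another. -/
lemma galu_eq_zero_of_mixed {m : ℕ∞} {σ : gal ℓ m K} {V W : ValuationSubring K}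
    (hσV : σ ∈ inertia ℓ m V) (hσW : σ ∈ inertia ℓ m W) (c : Kˣ)
    (hv : V.valuation (c:K) < 1) (hw : 1 < W.valuation (c:K)) : galu σ c = 0 := by
  have hc1 : (c:K) ≠ 1 := by
    intro h
    rw [h] at hv
    simp at hv
  have h1c : (1:K) - (c:K) ≠ 0 := sub_ne_zero.mpr (Ne.symm hc1)
  set yu : Kˣ := Units.mk0 _ h1c with hyu
  have hcinv : ((c⁻¹:Kˣ):K) ≠ 1 := by
    intro h
    rw [Units.val_inv_eq_inv_val] at h
    apply hc1
    rw [← inv_inv ((c:K)), h, inv_one]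
  have hzne : (1:K) - ((c:K))⁻¹ ≠ 0 := by
    rw [sub_ne_zero]
    intro h
    apply hcinv
    rw [Units.val_inv_eq_inv_val, ← h]
  set zu : Kˣ := Units.mk0 _ hzne with hzu
  -- yu = (-c) * zu
  have hyfact : yu = (-c) * zu := by
    ext
    show (1:K) - (c:K) = (-(c:K)) * (1 - ((c:K))⁻¹)
    linear_combination (-1 : K) * mul_inv_cancel₀ c.ne_zero
  -- σ yu = 0 via V
  have hvy : V.valuation ((yu:K)) = 1 := val_one_sub_of_lt hv
  have h1 : galu σ yu = 0 := hσV yu hvy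
  -- σ zu = 0 via W
  have hwz : W.valuation ((zu:K)) = 1 := by
    apply val_one_sub_of_lt
    rw [map_inv₀]
    exact inv_lt_one_of_one_lt₀ hw
  have h2 : galu σ zu = 0 := hσW zu hwz
  have hneg : (-c : Kˣ) = (-1 : Kˣ) * c := by ext; simp
  have h3 : galu σ (-1 : Kˣ) = 0 := galu_neg_one hσV
  rw [hyfact, galu_mul, hneg, galu_mul, h3, zero_add, h2, add_zero] at h1
  exact h1

/-- Step 1: produce `c₁` with mixed values and `σ c₁ ≠ 0`. -/
lemma step_one {m : ℕ∞} {σ : gal ℓ m K} {V W : ValuationSubring K}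
    (hσV : σ ∈ inertia ℓ m V) (hmin : MinProp σ V) (c₀ : Kˣ)
    (h1 : V.valuation (c₀:K) < 1) (h2 : 1 < W.valuation (c₀:K)) :
    ∃ c₁ : Kˣ, V.valuation (c₁:K) < 1 ∧ 1 < W.valuation (c₁:K) ∧ galu σ c₁ ≠ 0 := by
  by_cases hσc₀ : galu σ c₀ ≠ 0
  · exact ⟨c₀, h1, h2, hσc₀⟩
  push_neg at hσc₀
  obtain ⟨d, n, hdσ, hdlow, hdhigh⟩ := hmin c₀ h1
  have hvc₀pos : (0:V.ValueGroup) < V.valuation (c₀:K) := zero_lt_iff.mpr (val_ne_zero V c₀)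
  have hvdne : V.valuation (d:K) ≠ 0 := val_ne_zero V d
  -- wlog v d < 1
  have hvd1 : V.valuation (d:K) ≠ 1 := by
    intro h
    exact hdσ (hσV d h)
  obtain ⟨d, hdσ, hdlow, hvdlt⟩ :
      ∃ d : Kˣ, galu σ d ≠ 0 ∧ (V.valuation (c₀:K))^n ≤ V.valuation (d:K) ∧
        V.valuation (d:K) < 1 := by
    rcases lt_or_gt_of_ne hvd1 with hlt | hgt
    · exact ⟨d, hdσ, hdlow, hlt⟩
    · refine ⟨d⁻¹, ?_, ?_, ?_⟩
      · rw [galu_inv]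
        exact neg_ne_zero.mpr hdσ
      · rw [Units.val_inv_eq_inv_val, map_inv₀]
        calc (V.valuation (c₀:K))^n = (((V.valuation (c₀:K))⁻¹)^n)⁻¹ := by
              rw [inv_pow, inv_inv]
          _ ≤ (V.valuation (d:K))⁻¹ := by
              apply inv_anti₀ (zero_lt_iff.mpr hvdne) hdhigh
      · rw [Units.val_inv_eq_inv_val, map_inv₀]
        exact inv_lt_one_of_one_lt₀ hgt
  by_cases hwd : 1 < W.valuation (d:K)
  · exact ⟨d, hvdlt, hwd, hdσ⟩
  push_neg at hwd
  -- c₁ := c₀^(n+1) * d⁻¹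
  refine ⟨c₀^(n+1) * d⁻¹, ?_, ?_, ?_⟩
  · rw [Units.val_mul, map_mul, Units.val_pow_eq_pow_val, map_pow,
      Units.val_inv_eq_inv_val, map_inv₀]
    have hstep : (V.valuation (c₀:K))^(n+1) * (V.valuation (d:K))⁻¹
        ≤ (V.valuation (c₀:K))^(n+1) * ((V.valuation (c₀:K))^n)⁻¹ := by
      apply mul_le_mul'
      · exact le_rfl
      · exact inv_anti₀ (zero_lt_iff.mpr (pow_ne_zero _ (val_ne_zero V c₀))) hdlow
    have hcalc : (V.valuation (c₀:K))^(n+1) * ((V.valuation (c₀:K))^n)⁻¹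
        = V.valuation (c₀:K) := by
      rw [pow_succ, mul_comm ((V.valuation (c₀:K))^n), mul_assoc,
        mul_inv_cancel₀ (pow_ne_zero _ (val_ne_zero V c₀)), mul_one]
    exact lt_of_le_of_lt (hstep.trans (le_of_eq hcalc)) h1
  · rw [Units.val_mul, map_mul, Units.val_pow_eq_pow_val, map_pow,
      Units.val_inv_eq_inv_val, map_inv₀]
    have h1' : (1:W.ValueGroup) < (W.valuation (c₀:K))^(n+1) := one_lt_pow₀ h2 (by omega)
    have h2' : (1:W.ValueGroup) ≤ (W.valuation (d:K))⁻¹ :=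
      (one_le_inv₀ (zero_lt_iff.mpr (val_ne_zero W d))).mpr hwd
    calc (1:W.ValueGroup) < (W.valuation (c₀:K))^(n+1) := h1'
      _ = (W.valuation (c₀:K))^(n+1) * 1 := (mul_one _).symm
      _ ≤ (W.valuation (c₀:K))^(n+1) * (W.valuation (d:K))⁻¹ := mul_le_mul' le_rfl h2'
  · rw [galu_mul, galu_pow, galu_inv, hσc₀, smul_zero, zero_add]
    exact neg_ne_zero.mpr hdσ

end CPVsigma

section CPZorn
open scoped Classical
variable {ℓ : ℕ} [Fact ℓ.Prime] {K : Type*} [Field K]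

/-- Union of a chain of valuation subrings. -/
def chainUnion (c : Set (ValuationSubring K)) (hne : c.Nonempty)
    (hchain : IsChain (· ≤ ·) c) : ValuationSubring K where
  carrier := {x : K | ∃ A ∈ c, x ∈ A}
  one_mem' := ⟨hne.choose, hne.choose_spec, one_mem _⟩
  zero_mem' := ⟨hne.choose, hne.choose_spec, zero_mem _⟩
  add_mem' := by
    rintro a b ⟨A, hA, haA⟩ ⟨B, hB, hbB⟩
    rcases hchain.total hA hB with h | h
    · exact ⟨B, hB, add_mem (h haA) hbB⟩
    · exact ⟨A, hA, add_mem haA (h hbB)⟩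
  mul_mem' := by
    rintro a b ⟨A, hA, haA⟩ ⟨B, hB, hbB⟩
    rcases hchain.total hA hB with h | h
    · exact ⟨B, hB, mul_mem (h haA) hbB⟩
    · exact ⟨A, hA, mul_mem haA (h hbB)⟩
  neg_mem' := by
    rintro a ⟨A, hA, haA⟩
    exact ⟨A, hA, neg_mem haA⟩
  mem_or_inv_mem' := by
    intro x
    rcases hne.choose.mem_or_inv_mem x with h | h
    · exact Or.inl ⟨hne.choose, hne.choose_spec, h⟩
    · exact Or.inr ⟨hne.choose, hne.choose_spec, h⟩

lemma le_chainUnion {c : Set (ValuationSubring K)} {hne : c.Nonempty}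
    {hchain : IsChain (· ≤ ·) c} {A : ValuationSubring K} (hA : A ∈ c) :
    A ≤ chainUnion c hne hchain :=
  fun x hx => ⟨A, hA, hx⟩

lemma inertia_chainUnion {m : ℕ∞} {σ : gal ℓ m K} {c : Set (ValuationSubring K)}
    (hne : c.Nonempty) (hchain : IsChain (· ≤ ·) c)
    (hc : ∀ A ∈ c, σ ∈ inertia ℓ m A) : σ ∈ inertia ℓ m (chainUnion c hne hchain) := by
  intro x hx
  rw [val_unit_iff] at hx
  obtain ⟨⟨A, hA, haA⟩, ⟨B, hB, hbB⟩⟩ := hx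
  rcases hchain.total hA hB with h | h
  · exact hc B hB x ((val_unit_iff B x).mpr ⟨h haA, hbB⟩)
  · exact hc A hA x ((val_unit_iff A x).mpr ⟨haA, h hbB⟩)

/-- Every valuative element admits a valuation with `σ ∈ I_V` that is maximal. -/
lemma exists_max_inertia {m : ℕ∞} {σ : gal ℓ m K} (hσ : IsValuative σ) :
    ∃ V : ValuationSubring K, σ ∈ inertia ℓ m V ∧
      ∀ W : ValuationSubring K, σ ∈ inertia ℓ m W → V ≤ W → W ≤ V := by
  obtain ⟨A₀, hA₀⟩ := hσ
  have hchains : ∀ c ⊆ {A : ValuationSubring K | σ ∈ inertia ℓ m A},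
      IsChain (fun x1 x2 => x1 ≤ x2) c → ∀ y ∈ c,
        ∃ ub ∈ {A : ValuationSubring K | σ ∈ inertia ℓ m A}, ∀ z ∈ c, z ≤ ub := by
    intro c hcS hchain y hy
    refine ⟨chainUnion c ⟨y, hy⟩ hchain, inertia_chainUnion _ _ (fun A hA => hcS hA), ?_⟩
    intro z hz
    exact le_chainUnion hz
  obtain ⟨V, _, hVmem, hVmax⟩ := zorn_le_nonempty₀ _ hchains A₀ hA₀
  exact ⟨V, hVmem, fun W hW hVW => hVmax hW hVW⟩

/-- Lemma X: a valuation with the minimality property dominates every inertia valuation. -/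
lemma lemmaX {m : ℕ∞} {σ : gal ℓ m K} {V : ValuationSubring K}
    (hσV : σ ∈ inertia ℓ m V) (hmin : MinProp σ V)
    (W : ValuationSubring K) (hσW : σ ∈ inertia ℓ m W) : W ≤ V := by
  by_contra hWV
  obtain ⟨b, hbW, hbV⟩ := SetLike.not_le_iff_exists.mp hWV
  have hb0 : b ≠ 0 := fun h => hbV (h ▸ zero_mem V)
  set bu : Kˣ := Units.mk0 b hb0 with hbu
  have hvb : 1 < V.valuation b := not_le.mp (fun h => hbV ((V.valuation_le_one_iff b).mp h))
  have hwb : W.valuation b ≤ 1 := (W.valuation_le_one_iff b).mpr hbW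
  have hmem_of_le : ∀ (x : K) (k : ℕ), V.valuation x ≤ (V.valuation b)^k → V ≤ W → x ∈ W := by
    intro x k hx hVW
    have hb0' : (b^k : K) ≠ 0 := pow_ne_zero _ hb0
    have hxv : x * (b^k)⁻¹ ∈ V := by
      rw [← V.valuation_le_one_iff]
      rw [map_mul, map_inv₀, map_pow]
      calc V.valuation x * ((V.valuation b)^k)⁻¹
          ≤ (V.valuation b)^k * ((V.valuation b)^k)⁻¹ := mul_le_mul' hx le_rfl
        _ = 1 := mul_inv_cancel₀ (pow_ne_zero _ (by rw [Valuation.ne_zero_iff]; exact hb0))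
    have : x = (x * (b^k)⁻¹) * b^k := by field_simp
    rw [this]
    exact mul_mem (hVW hxv) (pow_mem hbW k)
  by_cases hVW : V ≤ W
  · -- V ⊆ W: use minimality at b⁻¹ and derive a W-unit with σ ≠ 0
    have hc₀ : V.valuation ((bu⁻¹ : Kˣ) : K) < 1 := by
      rw [Units.val_inv_eq_inv_val]
      show V.valuation ((bu:K))⁻¹ < 1
      rw [map_inv₀]
      exact inv_lt_one_of_one_lt₀ hvb
    obtain ⟨d, n, hdσ, hdlow, hdhigh⟩ := hmin bu⁻¹ hc₀
    have hvbne : V.valuation b ≠ 0 := by rw [Valuation.ne_zero_iff]; exact hb0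
    have hinv : V.valuation ((bu⁻¹ : Kˣ) : K) = (V.valuation b)⁻¹ := by
      rw [Units.val_inv_eq_inv_val, map_inv₀]
      rfl
    -- d ∈ W
    have hdW : ((d:Kˣ):K) ∈ W := by
      apply hmem_of_le _ n _ hVW
      rw [hinv, inv_inv] at hdhigh
      exact hdhigh
    -- d⁻¹ ∈ W
    have hdWinv : (((d:Kˣ):K))⁻¹ ∈ W := by
      apply hmem_of_le _ n _ hVW
      rw [hinv] at hdlow
      rw [map_inv₀]
      have h4 : (V.valuation ((d:Kˣ):K))⁻¹ ≤ (((V.valuation b)⁻¹)^n)⁻¹ :=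
        inv_anti₀ (zero_lt_iff.mpr (pow_ne_zero _ (inv_ne_zero hvbne))) hdlow
      rwa [inv_pow, inv_inv] at h4
    have hwd : W.valuation ((d:Kˣ):K) = 1 := (val_unit_iff W d).mpr ⟨hdW, hdWinv⟩
    exact hdσ (hσW d hwd)
  · -- incomparable
    obtain ⟨a, haV, haW⟩ := SetLike.not_le_iff_exists.mp hVW
    have ha0 : a ≠ 0 := fun h => haW (h ▸ zero_mem W)
    set au : Kˣ := Units.mk0 a ha0 with hau
    have hva : V.valuation a ≤ 1 := (V.valuation_le_one_iff a).mpr haV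
    have hwa : 1 < W.valuation a := not_le.mp (fun h => haW ((W.valuation_le_one_iff a).mp h))
    set c₀ : Kˣ := au * bu⁻¹ with hc₀u
    have hc₀val : ((c₀ : Kˣ) : K) = a * b⁻¹ := by
      rw [hc₀u, Units.val_mul, Units.val_inv_eq_inv_val]
      rfl
    have hvbne : V.valuation b ≠ 0 := by rw [Valuation.ne_zero_iff]; exact hb0
    have hwbne : W.valuation b ≠ 0 := by rw [Valuation.ne_zero_iff]; exact hb0
    have hv : V.valuation ((c₀:Kˣ):K) < 1 := by
      rw [hc₀val, map_mul, map_inv₀]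
      calc V.valuation a * (V.valuation b)⁻¹ ≤ 1 * (V.valuation b)⁻¹ :=
            mul_le_mul' hva le_rfl
        _ = (V.valuation b)⁻¹ := one_mul _
        _ < 1 := inv_lt_one_of_one_lt₀ hvb
    have hw : 1 < W.valuation ((c₀:Kˣ):K) := by
      rw [hc₀val, map_mul, map_inv₀]
      have h2' : (1:W.ValueGroup) ≤ (W.valuation b)⁻¹ :=
        (one_le_inv₀ (zero_lt_iff.mpr hwbne)).mpr hwb
      calc (1:W.ValueGroup) < W.valuation a := hwa
        _ = W.valuation a * 1 := (mul_one _).symm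
        _ ≤ W.valuation a * (W.valuation b)⁻¹ := mul_le_mul' le_rfl h2'
    obtain ⟨c₁, hc₁v, hc₁w, hc₁σ⟩ := step_one hσV hmin c₀ hv hw
    exact hc₁σ (galu_eq_zero_of_mixed hσV hσW c₁ hc₁v hc₁w)

/-- Existence of the coarsest inertia valuation, with minimality. -/
theorem exists_isVsigma {m : ℕ∞} {σ : gal ℓ m K} (hσ : IsValuative σ) :
    ∃ V : ValuationSubring K, IsVsigma σ V ∧ MinProp σ V := by
  obtain ⟨V, hVmem, hVmax⟩ := exists_max_inertia hσ
  have hmin : MinProp σ V := min_of_max hVmem hVmax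
  exact ⟨V, ⟨hVmem, fun W hW => lemmaX hVmem hmin W hW⟩, hmin⟩

end CPZorn

section CPStep2
open scoped Classical
variable {ℓ : ℕ} [Fact ℓ.Prime] {K : Type*} [Field K]

lemma pick_exp {m : ℕ∞} (α β : Lam ℓ m) (hα : α ≠ 0) (a : ℕ) :
    ∃ K' : ℕ, (a + 1 ≤ K') ∧ K' • α + β ≠ 0 := by
  by_cases hone : (a+1) • α + β ≠ 0
  · exact ⟨a+1, le_rfl, hone⟩
  push_neg at hone
  refine ⟨a+2, by omega, ?_⟩
  intro h2
  apply hα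
  have h3 : ((a+2) • α + β) - ((a+1) • α + β) = α := by
    have : (a+2) • α = (a+1) • α + α := succ_nsmul α (a+1)
    rw [this]
    abel
  rw [h2, hone, sub_self] at h3
  exact h3.symm

lemma one_lt_mul_of_lt_of_le {Γ : Type*} [LinearOrderedCommGroupWithZero Γ]
    {a b : Γ} (ha : 1 < a) (hb : 1 ≤ b) : 1 < a * b :=
  lt_of_lt_of_le ha (by calc a = a * 1 := (mul_one _).symm
    _ ≤ a * b := mul_le_mul' le_rfl hb)

lemma mul_lt_one_of_lt_of_le {Γ : Type*} [LinearOrderedCommGroupWithZero Γ]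
    {a b : Γ} (ha : a < 1) (hb : b ≤ 1) : a * b < 1 :=
  lt_of_le_of_lt (by calc a * b ≤ a * 1 := mul_le_mul' le_rfl hb
    _ = a := mul_one _) ha

/-- Step 2: upgrade `c₁` to also have `τ c₂ ≠ 0`. -/
lemma step_two {m : ℕ∞} {σ τ : gal ℓ m K} {V W : ValuationSubring K}
    (hτW : τ ∈ inertia ℓ m W) (hminτ : MinProp τ W) (c₁ : Kˣ)
    (h1 : V.valuation (c₁:K) < 1) (h2 : 1 < W.valuation (c₁:K)) (h3 : galu σ c₁ ≠ 0) :
    ∃ c₂ : Kˣ, V.valuation (c₂:K) < 1 ∧ 1 < W.valuation (c₂:K) ∧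
      galu σ c₂ ≠ 0 ∧ galu τ c₂ ≠ 0 := by
  by_cases hτc₁ : galu τ c₁ ≠ 0
  · exact ⟨c₁, h1, h2, h3, hτc₁⟩
  push_neg at hτc₁
  have hw1ne : W.valuation (c₁:K) ≠ 0 := val_ne_zero W c₁
  have hwinv : W.valuation ((c₁⁻¹:Kˣ):K) < 1 := by
    rw [Units.val_inv_eq_inv_val, map_inv₀]
    exact inv_lt_one_of_one_lt₀ h2
  obtain ⟨e, n', heτ, helow, hehigh⟩ := hminτ c₁⁻¹ hwinv
  have hwc : W.valuation ((c₁⁻¹:Kˣ):K) = (W.valuation (c₁:K))⁻¹ := by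
    rw [Units.val_inv_eq_inv_val, map_inv₀]
  rw [hwc] at helow hehigh
  rw [inv_inv] at hehigh
  -- wlog 1 < w e with the upper bound
  have hwene : W.valuation (e:K) ≠ 0 := val_ne_zero W e
  have hwe1 : W.valuation (e:K) ≠ 1 := fun h => heτ (hτW e h)
  obtain ⟨e, heτ, hwe, hebound⟩ :
      ∃ e : Kˣ, galu τ e ≠ 0 ∧ 1 < W.valuation (e:K) ∧
        W.valuation (e:K) ≤ (W.valuation (c₁:K))^n' := by
    rcases lt_or_gt_of_ne hwe1 with hlt | hgt
    · refine ⟨e⁻¹, ?_, ?_, ?_⟩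
      · rw [galu_inv]; exact neg_ne_zero.mpr heτ
      · rw [Units.val_inv_eq_inv_val, map_inv₀]
        exact (one_lt_inv₀ (zero_lt_iff.mpr hwene)).mpr hlt
      · rw [Units.val_inv_eq_inv_val, map_inv₀]
        have h4 : ((W.valuation (c₁:K))⁻¹)^n' ≤ W.valuation (e:K) := helow
        have h5 : (W.valuation ((e:Kˣ):K))⁻¹ ≤ (((W.valuation (c₁:K))⁻¹)^n')⁻¹ :=
          inv_anti₀ (zero_lt_iff.mpr (pow_ne_zero _ (inv_ne_zero hw1ne))) h4
        rwa [inv_pow, inv_inv] at h5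
    · exact ⟨e, heτ, hgt, hehigh⟩
  have hwene2 : W.valuation (e:K) ≠ 0 := val_ne_zero W e
  by_cases hve : V.valuation (e:K) ≤ 1
  · -- c₂ = c₁^K' * e
    obtain ⟨K', hK1, hKσ⟩ := pick_exp (galu σ c₁) (galu σ e) h3 0
    have hK0 : K' ≠ 0 := by omega
    refine ⟨c₁^K' * e, ?_, ?_, ?_, ?_⟩
    · rw [Units.val_mul, map_mul, Units.val_pow_eq_pow_val, map_pow]
      exact mul_lt_one_of_lt_of_le (pow_lt_one₀ (zero_le') h1 hK0) hve
    · rw [Units.val_mul, map_mul, Units.val_pow_eq_pow_val, map_pow]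
      exact one_lt_mul_of_lt_of_le (one_lt_pow₀ h2 hK0) hwe.le
    · rw [galu_mul, galu_pow]
      exact hKσ
    · rw [galu_mul, galu_pow, hτc₁, smul_zero, zero_add]
      exact heτ
  · push_neg at hve
    have hvene : V.valuation (e:K) ≠ 0 := val_ne_zero V e
    obtain ⟨K', hK1, hKσ⟩ := pick_exp (galu σ c₁) (-(galu σ e)) h3 n'
    have hK0 : K' ≠ 0 := by omega
    refine ⟨c₁^K' * e⁻¹, ?_, ?_, ?_, ?_⟩
    · rw [Units.val_mul, map_mul, Units.val_pow_eq_pow_val, map_pow,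
        Units.val_inv_eq_inv_val, map_inv₀]
      exact mul_lt_one_of_lt_of_le (pow_lt_one₀ (zero_le') h1 hK0)
        (inv_le_one_of_one_le₀ hve.le)
    · rw [Units.val_mul, map_mul, Units.val_pow_eq_pow_val, map_pow,
        Units.val_inv_eq_inv_val, map_inv₀]
      -- (w c₁)^K' * (w e)⁻¹ ≥ (w c₁)^(K'-n') > 1
      have hj : ∃ j : ℕ, j ≠ 0 ∧ K' = n' + j := ⟨K' - n', by omega, by omega⟩
      obtain ⟨j, hj0, rfl⟩ := hj
      have hstep : (W.valuation (c₁:K))^(n'+j) * ((W.valuation (c₁:K))^n')⁻¹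
          ≤ (W.valuation (c₁:K))^(n'+j) * (W.valuation ((e:Kˣ):K))⁻¹ :=
        mul_le_mul' le_rfl (inv_anti₀ (zero_lt_iff.mpr hwene2) hebound)
      have hcalc : (W.valuation (c₁:K))^(n'+j) * ((W.valuation (c₁:K))^n')⁻¹
          = (W.valuation (c₁:K))^j := by
        rw [pow_add, mul_comm ((W.valuation (c₁:K))^n'), mul_assoc,
          mul_inv_cancel₀ (pow_ne_zero _ hw1ne), mul_one]
      have h6 : (1:W.ValueGroup) < (W.valuation (c₁:K))^j := one_lt_pow₀ h2 hj0
      calc (1:W.ValueGroup) < (W.valuation (c₁:K))^j := h6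
        _ = (W.valuation (c₁:K))^(n'+j) * ((W.valuation (c₁:K))^n')⁻¹ := hcalc.symm
        _ ≤ _ := hstep
    · rw [galu_mul, galu_pow, galu_inv]
      exact hKσ
    · rw [galu_mul, galu_pow, galu_inv, hτc₁, smul_zero, zero_add]
      exact neg_ne_zero.mpr heτ

/-- The key evaluation point `x = c/(c-1)`. -/
lemma key_eval {m : ℕ∞} {σ τ : gal ℓ m K} {V W : ValuationSubring K}
    (hσV : σ ∈ inertia ℓ m V) (hτW : τ ∈ inertia ℓ m W) (c : Kˣ)
    (hv : V.valuation (c:K) < 1) (hw : 1 < W.valuation (c:K))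
    (hσc : galu σ c ≠ 0) (hτc : galu τ c ≠ 0) :
    ∃ x : K, x ≠ 0 ∧ x ≠ 1 ∧ galApp σ x ≠ 0 ∧ galApp τ (1-x) ≠ 0 ∧
      galApp σ (1-x) = 0 ∧ galApp τ x = 0 := by
  have hc1 : (c:K) ≠ 1 := by
    intro h
    rw [h] at hv
    simp at hv
  have hcm1 : (c:K) - 1 ≠ 0 := sub_ne_zero.mpr hc1
  set cm1 : Kˣ := Units.mk0 _ hcm1 with hcm1u
  set xu : Kˣ := c * cm1⁻¹ with hxu
  set x : K := (xu : K) with hx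
  have hxval : x = (c:K) * ((c:K) - 1)⁻¹ := by
    rw [hx, hxu, Units.val_mul, Units.val_inv_eq_inv_val]
    rfl
  have hvc1 : V.valuation ((cm1:K)) = 1 := by
    show V.valuation ((c:K)-1) = 1
    rw [show (c:K)-1 = -(1-(c:K)) by ring, Valuation.map_neg]
    exact val_one_sub_of_lt hv
  have hσcm1 : galu σ cm1 = 0 := hσV cm1 hvc1
  -- the (1-x) unit
  set yu : Kˣ := (-1 : Kˣ) * cm1⁻¹ with hyu
  have h1x : (1:K) - x = (yu : K) := by
    rw [hyu, Units.val_mul, Units.val_inv_eq_inv_val, hxval]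
    show (1:K) - (c:K) * ((c:K)-1)⁻¹ = ((-1 : Kˣ) : K) * ((c:K) - 1)⁻¹
    rw [Units.val_neg, Units.val_one]
    linear_combination (-1:K) * mul_inv_cancel₀ hcm1
  -- W-side: w(c-1) = w c
  have hwc1 : W.valuation ((cm1:K)) = W.valuation (c:K) := by
    show W.valuation ((c:K)-1) = W.valuation (c:K)
    rw [show (c:K)-1 = -(1-(c:K)) by ring, Valuation.map_neg]
    exact val_one_sub_of_gt hw
  -- τ(c-1) = τ c
  have hsune : (1:K) - ((c:K))⁻¹ ≠ 0 := by
    rw [sub_ne_zero]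
    intro h
    apply hc1
    rw [← inv_inv ((c:K)), ← h, inv_one]
  set su : Kˣ := Units.mk0 _ hsune with hsu
  have hcm1fact : cm1 = c * su := by
    ext
    show (c:K) - 1 = (c:K) * (1 - ((c:K))⁻¹)
    linear_combination mul_inv_cancel₀ c.ne_zero
  have hwsu : W.valuation ((su:K)) = 1 := by
    apply val_one_sub_of_lt
    rw [map_inv₀]
    exact inv_lt_one_of_one_lt₀ hw
  have hτcm1 : galu τ cm1 = galu τ c := by
    rw [hcm1fact, galu_mul, hτW su hwsu, add_zero]
  refine ⟨x, xu.ne_zero, ?_, ?_, ?_, ?_, ?_⟩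
  -- x ≠ 1
  · intro h
    rw [hxval] at h
    have h2 : (c:K) = (c:K) - 1 := by
      field_simp at h
      exact h
    have h3 : (1:K) = 0 := by linear_combination h2
    exact one_ne_zero h3
  -- galApp σ x ≠ 0
  · have he : galApp σ x = galu σ xu := galApp_unit σ xu
    rw [he, hxu, galu_mul, galu_inv, hσcm1, neg_zero, add_zero]
    exact hσc
  -- galApp τ (1-x) ≠ 0
  · rw [h1x]
    have he : galApp τ ((yu:K)) = galu τ yu := galApp_unit τ yu
    rw [he, hyu, galu_mul, galu_inv, galu_neg_one hτW, zero_add, hτcm1]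
    exact neg_ne_zero.mpr hτc
  -- galApp σ (1-x) = 0
  · rw [h1x]
    have he : galApp σ ((yu:K)) = galu σ yu := galApp_unit σ yu
    rw [he, hyu, galu_mul, galu_inv, galu_neg_one hσV, zero_add, hσcm1, neg_zero]
  -- galApp τ x = 0
  · have he : galApp τ x = galu τ xu := galApp_unit τ xu
    rw [he]
    apply hτW
    show W.valuation ((xu:K)) = 1
    rw [hxu, Units.val_mul, map_mul, Units.val_inv_eq_inv_val, map_inv₀, hwc1]
    exact mul_inv_cancel₀ (val_ne_zero W c)

end CPStep2

section CPContra
open scoped Classical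
variable {ℓ : ℕ} [Fact ℓ.Prime] {K : Type*} [Field K]

lemma zmod_core_contra (ℓ mn Mn : ℕ) [Fact ℓ.Prime] (hmn : 1 ≤ mn) (hMn : 2*mn - 1 ≤ Mn)
    (hdvd : (ℓ:ℕ)^mn ∣ ℓ^Mn) (a b c d : ZMod (ℓ^Mn))
    (ha : ZMod.castHom hdvd (ZMod (ℓ^mn)) a ≠ 0)
    (hb : ZMod.castHom hdvd (ZMod (ℓ^mn)) b ≠ 0)
    (hc : ZMod.castHom hdvd (ZMod (ℓ^mn)) c = 0)
    (hd : ZMod.castHom hdvd (ZMod (ℓ^mn)) d = 0) :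
    a * b ≠ c * d := by
  have hp : ℓ.Prime := Fact.out
  have hl : ℓ ≠ 0 := hp.ne_zero
  haveI : NeZero (ℓ^Mn) := ⟨pow_ne_zero _ hl⟩
  have hcast : ∀ x : ZMod (ℓ^Mn),
      ZMod.castHom hdvd (ZMod (ℓ^mn)) x = ((x.val : ℕ) : ZMod (ℓ^mn)) := by
    intro x
    rw [ZMod.castHom_apply, ← ZMod.natCast_val]
  have hdvd_iff : ∀ x : ZMod (ℓ^Mn),
      ZMod.castHom hdvd (ZMod (ℓ^mn)) x = 0 ↔ ℓ^mn ∣ x.val := by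
    intro x
    rw [hcast, ZMod.natCast_eq_zero_iff]
  have hna : ¬ ℓ^mn ∣ a.val := fun h => ha ((hdvd_iff a).mpr h)
  have hnb : ¬ ℓ^mn ∣ b.val := fun h => hb ((hdvd_iff b).mpr h)
  have hc' : ℓ^mn ∣ c.val := (hdvd_iff c).mp hc
  have hd' : ℓ^mn ∣ d.val := (hdvd_iff d).mp hd
  intro heq
  have hval : ∀ x : ZMod (ℓ^Mn), ((x.val : ℕ) : ZMod (ℓ^Mn)) = x :=
    fun x => (ZMod.natCast_val x).trans (ZMod.cast_id _ _)
  have hmodeq : (a.val * b.val) ≡ (c.val * d.val) [MOD ℓ^Mn] := by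
    rw [← ZMod.natCast_eq_natCast_iff]
    push_cast
    rw [hval, hval, hval, hval]
    exact heq
  have hsmall : a.val * b.val ≡ c.val * d.val [MOD ℓ^(2*mn-1)] :=
    hmodeq.of_dvd (pow_dvd_pow ℓ hMn)
  have hcd : ℓ^(2*mn-1) ∣ c.val * d.val := by
    have h1 : ℓ^mn * ℓ^mn ∣ c.val * d.val := mul_dvd_mul hc' hd'
    rw [← pow_add] at h1
    exact dvd_trans (pow_dvd_pow ℓ (by omega)) h1
  have hab : ℓ^(2*mn-1) ∣ a.val * b.val := by
    have := (Nat.modEq_zero_iff_dvd).mpr hcd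
    exact (Nat.modEq_zero_iff_dvd).mp (hsmall.trans this)
  -- factorization contradiction
  have ha0 : a.val ≠ 0 := fun h => hna (h ▸ dvd_zero _)
  have hb0 : b.val ≠ 0 := fun h => hnb (h ▸ dvd_zero _)
  have hfa : a.val.factorization ℓ < mn := by
    by_contra hfa
    push_neg at hfa
    exact hna ((hp.pow_dvd_iff_le_factorization ha0).mpr hfa)
  have hfb : b.val.factorization ℓ < mn := by
    by_contra hfb
    push_neg at hfb
    exact hnb ((hp.pow_dvd_iff_le_factorization hb0).mpr hfb)
  have hfab : 2*mn - 1 ≤ (a.val * b.val).factorization ℓ :=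
    (hp.pow_dvd_iff_le_factorization (mul_ne_zero ha0 hb0)).mp hab
  rw [Nat.factorization_mul ha0 hb0, Finsupp.add_apply] at hfab
  omega

lemma lam_contra {m M : ℕ∞} (hm : 1 ≤ m) (hM : Mfun 1 m ≤ M)
    (a b c d : Lam ℓ M)
    (ha : LamProj ℓ M m a ≠ 0) (hb : LamProj ℓ M m b ≠ 0)
    (hc : LamProj ℓ M m c = 0) (hd : LamProj ℓ M m d = 0) :
    a * b ≠ c * d := by
  induction m using ENat.recTopCoe with
  | top =>
    obtain rfl : M = ⊤ := Mfun_one_top_le hM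
    have ha' : a ≠ 0 := by
      intro h
      exact ha (by rw [h]; exact map_zero _)
    have hb' : b ≠ 0 := by
      intro h
      exact hb (by rw [h]; exact map_zero _)
    have hc' : c = 0 := hc
    have hd' : d = 0 := hd
    have hcd0 : c * d = (0 : Lam ℓ ⊤) := by rw [hc', hd']; exact mul_zero _
    rw [hcd0]
    exact mul_ne_zero (M₀ := PadicInt ℓ) ha' hb'
  | coe mn =>
    have hmn : 1 ≤ mn := by simpa using hm
    induction M using ENat.recTopCoe with
    | top =>
      -- project to level 2*mn
      have hdvd : (ℓ:ℕ)^mn ∣ ℓ^(2*mn) := pow_dvd_pow ℓ (by omega)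
      have hkey : ∀ x : Lam ℓ ⊤,
          ZMod.castHom hdvd (ZMod (ℓ^mn)) (PadicInt.toZModPow (2*mn) (x : PadicInt ℓ))
            = LamProj ℓ ⊤ (mn : ℕ∞) x := by
        intro x
        rw [ZMod.castHom_apply]
        exact PadicInt.cast_toZModPow mn (2*mn) (by omega) x
      intro heq
      apply zmod_core_contra ℓ mn (2*mn) hmn (by omega) hdvd
        (PadicInt.toZModPow (2*mn) (a : PadicInt ℓ))
        (PadicInt.toZModPow (2*mn) (b : PadicInt ℓ))
        (PadicInt.toZModPow (2*mn) (c : PadicInt ℓ))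
        (PadicInt.toZModPow (2*mn) (d : PadicInt ℓ))
        (by rw [hkey]; exact ha) (by rw [hkey]; exact hb)
        (by rw [hkey]; exact hc) (by rw [hkey]; exact hd)
      have := congrArg (PadicInt.toZModPow (2*mn))
        (show (a : PadicInt ℓ) * (b : PadicInt ℓ) = (c : PadicInt ℓ) * (d : PadicInt ℓ) from heq)
      exact (map_mul (PadicInt.toZModPow (2*mn)) (a : PadicInt ℓ) (b : PadicInt ℓ)).symm.trans
        (this.trans (map_mul (PadicInt.toZModPow (2*mn)) (c : PadicInt ℓ) (d : PadicInt ℓ)))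
    | coe Mn =>
      have hMn : 2 * mn - 1 ≤ Mn := by
        have h1 := Mfun_one_coe_le hM
        have h2 : ((2 * mn - 1 : ℕ) : ℕ∞) ≤ ((Mn : ℕ) : ℕ∞) := h1
        exact WithTop.coe_le_coe.mp h2
      have hdvd : (ℓ:ℕ)^mn ∣ ℓ^Mn := pow_dvd_pow ℓ (by omega)
      have hred : LamProj ℓ (Mn : ℕ∞) (mn : ℕ∞)
          = (ZMod.castHom hdvd (ZMod (ℓ^mn))).toAddMonoidHom := by
        show (if h : (ℓ:ℕ)^mn ∣ ℓ^Mn then (ZMod.castHom h (ZMod (ℓ^mn))).toAddMonoidHom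
          else 0) = _
        rw [dif_pos hdvd]
      have hLP : ∀ x : Lam ℓ (Mn : ℕ∞), LamProj ℓ (Mn : ℕ∞) (mn : ℕ∞) x
          = ZMod.castHom hdvd (ZMod (ℓ^mn)) x := by
        intro x
        rw [hred]
        rfl
      have ha2 : ZMod.castHom hdvd (ZMod (ℓ^mn)) a ≠ 0 := by
        intro h; apply ha
        show LamProj ℓ (Mn : ℕ∞) (mn : ℕ∞) a = 0
        rw [hLP a]; exact h
      have hb2 : ZMod.castHom hdvd (ZMod (ℓ^mn)) b ≠ 0 := by
        intro h; apply hb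
        show LamProj ℓ (Mn : ℕ∞) (mn : ℕ∞) b = 0
        rw [hLP b]; exact h
      have hc2 : ZMod.castHom hdvd (ZMod (ℓ^mn)) c = 0 := by
        rw [← hLP c]
        exact hc
      have hd2 : ZMod.castHom hdvd (ZMod (ℓ^mn)) d = 0 := by
        rw [← hLP d]
        exact hd
      exact zmod_core_contra ℓ mn Mn hmn hMn hdvd a b c d ha2 hb2 hc2 hd2

lemma galApp_proj {m M : ℕ∞} (σ' : gal ℓ M K) (x : K) :
    LamProj ℓ M m (galApp σ' x) = galApp (galProj M m σ') x := by
  by_cases hx : x ≠ 0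
  · have h1 : galApp σ' x = galu σ' (Units.mk0 x hx) := dif_pos hx
    have h2 : galApp (galProj M m σ') x = galu (galProj M m σ') (Units.mk0 x hx) := dif_pos hx
    rw [h1, h2]
    rfl
  · push_neg at hx
    have h1 : galApp σ' x = 0 := dif_neg (by simpa using hx)
    have h2 : galApp (galProj M m σ') x = 0 := dif_neg (by simpa using hx)
    rw [h1, h2, map_zero]

end CPContra
end CP

/-- Comparability of `v_σ` and `v_τ` is detected by C-pairs of lifts. -/
theorem stmt13 (ℓ : ℕ) [Fact ℓ.Prime] (m M : ℕ∞) (hm : 1 ≤ m) (hM : Mfun 1 m ≤ M)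
    (K : Type*) [Field K] (hμ : MuIn K 2 ℓ M) (σ τ : gal ℓ m K)
    (hσ : IsValuative σ) (hτ : IsValuative τ) :
    (∃ Vσ Vτ : ValuationSubring K, IsVsigma σ Vσ ∧ IsVsigma τ Vτ ∧
      (Vσ ≤ Vτ ∨ Vτ ≤ Vσ)) ↔
    (∃ σ' τ' : gal ℓ M K, galProj M m σ' = σ ∧ galProj M m τ' = τ ∧ IsCPair σ' τ') := by
  constructor
  · rintro ⟨Vσ, Vτ, hVσ, hVτ, hcomp | hcomp⟩
    · exact CP.forward_of_inertia hm hM Vσ σ τ hVσ.1 (CP.inertia_anti hcomp hVτ.1)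
    · exact CP.forward_of_inertia hm hM Vτ σ τ (CP.inertia_anti hcomp hVσ.1) hVτ.1
  · rintro ⟨σ', τ', hσp, hτp, hC⟩
    obtain ⟨Vσ, hVσ, hminσ⟩ := CP.exists_isVsigma hσ
    obtain ⟨Vτ, hVτ, hminτ⟩ := CP.exists_isVsigma hτ
    refine ⟨Vσ, Vτ, hVσ, hVτ, ?_⟩
    by_contra hcomp
    push_neg at hcomp
    obtain ⟨h1, h2⟩ := hcomp
    -- incomparable; construct c₀ with v_Vσ c₀ < 1 < v_Vτ c₀
    obtain ⟨a, haV, haW⟩ := SetLike.not_le_iff_exists.mp h1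
    obtain ⟨b, hbW, hbV⟩ := SetLike.not_le_iff_exists.mp h2
    have ha0 : a ≠ 0 := fun h => haW (h ▸ zero_mem Vτ)
    have hb0 : b ≠ 0 := fun h => hbV (h ▸ zero_mem Vσ)
    set au : Kˣ := Units.mk0 a ha0 with hau
    set bu : Kˣ := Units.mk0 b hb0 with hbu
    have hva : Vσ.valuation a ≤ 1 := (Vσ.valuation_le_one_iff a).mpr haV
    have hwa : 1 < Vτ.valuation a :=
      not_le.mp (fun h => haW ((Vτ.valuation_le_one_iff a).mp h))
    have hwb : Vτ.valuation b ≤ 1 := (Vτ.valuation_le_one_iff b).mpr hbW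
    have hvb : 1 < Vσ.valuation b :=
      not_le.mp (fun h => hbV ((Vσ.valuation_le_one_iff b).mp h))
    have hvbne : Vσ.valuation b ≠ 0 := by rw [Valuation.ne_zero_iff]; exact hb0
    have hwbne : Vτ.valuation b ≠ 0 := by rw [Valuation.ne_zero_iff]; exact hb0
    set c₀ : Kˣ := au * bu⁻¹ with hc₀u
    have hc₀val : ((c₀ : Kˣ) : K) = a * b⁻¹ := by
      rw [hc₀u, Units.val_mul, Units.val_inv_eq_inv_val]
      rfl
    have hv : Vσ.valuation ((c₀:Kˣ):K) < 1 := by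
      rw [hc₀val, map_mul, map_inv₀]
      calc Vσ.valuation a * (Vσ.valuation b)⁻¹ ≤ 1 * (Vσ.valuation b)⁻¹ :=
            mul_le_mul' hva le_rfl
        _ = (Vσ.valuation b)⁻¹ := one_mul _
        _ < 1 := inv_lt_one_of_one_lt₀ hvb
    have hw : 1 < Vτ.valuation ((c₀:Kˣ):K) := by
      rw [hc₀val, map_mul, map_inv₀]
      have h2' : (1:Vτ.ValueGroup) ≤ (Vτ.valuation b)⁻¹ :=
        (one_le_inv₀ (zero_lt_iff.mpr hwbne)).mpr hwb
      calc (1:Vτ.ValueGroup) < Vτ.valuation a := hwa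
        _ = Vτ.valuation a * 1 := (mul_one _).symm
        _ ≤ Vτ.valuation a * (Vτ.valuation b)⁻¹ := mul_le_mul' le_rfl h2'
    obtain ⟨c₁, hc₁v, hc₁w, hc₁σ⟩ := CP.step_one hVσ.1 hminσ c₀ hv hw
    obtain ⟨c₂, hc₂v, hc₂w, hc₂σ, hc₂τ⟩ := CP.step_two hVτ.1 hminτ c₁ hc₁v hc₁w hc₁σ
    obtain ⟨x, hx0, hx1, hσx, hτ1x, hσ1x, hτx⟩ :=
      CP.key_eval hVσ.1 hVτ.1 c₂ hc₂v hc₂w hc₂σ hc₂τ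
    have heq := hC x hx0 hx1
    apply CP.lam_contra hm hM (galApp σ' x) (galApp τ' (1-x)) (galApp σ' (1-x)) (galApp τ' x)
      ?_ ?_ ?_ ?_ heq
    · rw [CP.galApp_proj, hσp]
      exact hσx
    · rw [CP.galApp_proj, hτp]
      exact hτ1x
    · rw [CP.galApp_proj, hσp]
      exact hσ1x
    · rw [CP.galApp_proj, hτp]
      exact hτx
end
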